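/- arXiv:2007.00401 — 9 statements merged into one kernel-verified Lean document; each statement's English description precedes it below -/
import Mathlib

section
/- For every α > 1 there exists a constant c = c(α) > 0 such that for all a, b ∈ ℝ^N one has ‖b − a‖^α ≤ c · ‖b^α − a^α‖. -/
noncomputable section

/-- The signed power `x^m := ‖x‖^(m-1) • x` on `ℝ^N` (Euclidean norm, `0^m := 0`). -/
def vpow {N : ℕ} (m : ℝ) (x : EuclideanSpace ℝ (Fin N)) : EuclideanSpace ℝ (Fin N) :=
  (‖x‖ ^ (m - 1)) • x

/-- For every `α > 1` there exists `c = c(α) > 0` such that for all `a, b ∈ ℝ^N`,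
`‖b - a‖^α ≤ c * ‖b^α - a^α‖`. -/
theorem norm_sub_rpow_le {N : ℕ} (hN : 1 ≤ N) (α : ℝ) (hα : 1 < α) :
    ∃ c : ℝ, 0 < c ∧ ∀ a b : EuclideanSpace ℝ (Fin N),
      ‖b - a‖ ^ α ≤ c * ‖vpow α b - vpow α a‖ := by
  have hα0 : (0:ℝ) < α := by linarith
  refine ⟨2 ^ α, Real.rpow_pos_of_pos two_pos α, fun a b => ?_⟩
  by_cases hab : b = a
  · simp [hab, Real.zero_rpow (ne_of_gt hα0)]
  have hd : (0:ℝ) < ‖b - a‖ := by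
    rw [norm_pos_iff]; exact sub_ne_zero.mpr hab
  set d := ‖b - a‖ with hdd
  set s := ‖b‖ with hss
  set r := ‖a‖ with hrr
  set X := s ^ (α - 1) with hX
  set Y := r ^ (α - 1) with hY
  set n := ‖vpow α b - vpow α a‖ with hn
  set I : ℝ := (inner ℝ (vpow α b - vpow α a) (b - a) : ℝ) with hI
  have hs : 0 ≤ s := norm_nonneg _
  have hr : 0 ≤ r := norm_nonneg _
  have hX0 : 0 ≤ X := Real.rpow_nonneg hs _
  have hY0 : 0 ≤ Y := Real.rpow_nonneg hr _
  set t : ℝ := (inner ℝ b a : ℝ) with ht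
  have hc : (inner ℝ a b : ℝ) = t := (real_inner_comm b a).trans ht.symm
  have h1 : I = X * s^2 + Y * r^2 - (X + Y) * t := by
    rw [hI]
    simp only [vpow, inner_sub_left, inner_sub_right, real_inner_smul_left,
      real_inner_self_eq_norm_sq, hc, ← ht, ← hss, ← hrr, ← hX, ← hY]
    ring
  have h2 : d^2 = s^2 + r^2 - 2*t := by
    rw [hdd, norm_sub_sq_real, ← ht]; ring
  have hmono : 0 ≤ (X - Y) * (s^2 - r^2) := by
    rcases le_total r s with h | h
    · have h1' : Y ≤ X := Real.rpow_le_rpow hr h (by linarith)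
      have h2' : r^2 ≤ s^2 := by nlinarith
      exact mul_nonneg (by linarith) (by linarith)
    · have h1' : X ≤ Y := Real.rpow_le_rpow hs h (by linarith)
      have h2' : s^2 ≤ r^2 := by nlinarith
      nlinarith [mul_nonneg (sub_nonneg.mpr h1') (sub_nonneg.mpr h2')]
  have hinner : (1/2) * (X + Y) * d^2 ≤ I := by
    rw [h1, h2]; nlinarith [hmono]
  -- bound d^(α-1) by 2^(α-1) * (X + Y)
  have hdsr : d ≤ s + r := norm_sub_le b a
  have h31 : d ^ (α-1) ≤ (s + r) ^ (α-1) :=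
    Real.rpow_le_rpow hd.le hdsr (by linarith)
  have h32 : (s + r) ^ (α-1) ≤ (2 * max s r) ^ (α-1) := by
    apply Real.rpow_le_rpow (by positivity) _ (by linarith)
    rcases le_total s r with h | h
    · simp [max_eq_right h]; linarith
    · simp [max_eq_left h]; linarith
  have h33 : (2 * max s r) ^ (α-1) = 2 ^ (α-1) * (max s r) ^ (α-1) :=
    Real.mul_rpow (by norm_num) (le_max_of_le_left hs)
  have h34 : (max s r) ^ (α-1) ≤ X + Y := by
    rcases le_total s r with h | h
    · rw [max_eq_right h]; linarith
    · rw [max_eq_left h]; linarith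
  have h2pos : (0:ℝ) < 2 ^ (α-1) := Real.rpow_pos_of_pos two_pos _
  have h3 : d ^ (α-1) ≤ 2 ^ (α-1) * (X + Y) := by
    calc d ^ (α-1) ≤ (2 * max s r) ^ (α-1) := le_trans h31 h32
    _ = 2 ^ (α-1) * (max s r) ^ (α-1) := h33
    _ ≤ 2 ^ (α-1) * (X + Y) := by nlinarith
  have hCS : I ≤ n * d := real_inner_le_norm _ _
  have hda : d ^ α = d ^ (α-1) * d := by
    rw [← Real.rpow_add_one hd.ne']; ring_nf
  have h2a : (2:ℝ) ^ α = 2 ^ (α-1) * 2 := by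
    rw [← Real.rpow_add_one (by norm_num : (2:ℝ) ≠ 0)]; ring_nf
  have hdam : 0 ≤ d ^ (α-1) := Real.rpow_nonneg hd.le _
  have h2anng : (0:ℝ) ≤ 2 ^ α := by positivity
  -- main chain: d^α * d ≤ 2^α * n * d
  have key : d ^ α * d ≤ 2 ^ α * n * d := by
    have c1 : d ^ α * d = d ^ (α-1) * d^2 := by rw [hda]; ring
    have c2 : d ^ (α-1) * d^2 ≤ 2 ^ (α-1) * (X + Y) * d^2 :=
      mul_le_mul_of_nonneg_right h3 (sq_nonneg d)
    have c3 : 2 ^ (α-1) * (X + Y) * d^2 ≤ 2 ^ α * I := by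
      have h := mul_le_mul_of_nonneg_left hinner h2pos.le
      rw [h2a]; linarith
    have c4 : 2 ^ α * I ≤ 2 ^ α * (n * d) :=
      mul_le_mul_of_nonneg_left hCS h2anng
    calc d ^ α * d = d ^ (α-1) * d^2 := c1
    _ ≤ 2 ^ (α-1) * (X + Y) * d^2 := c2
    _ ≤ 2 ^ α * I := c3
    _ ≤ 2 ^ α * (n * d) := c4
    _ = 2 ^ α * n * d := by ring
  exact le_of_mul_le_mul_right key hd

end
end

section
/- For every m > 0 there exists a constant c = c(m) ≥ 1 such that for all u, g ∈ ℝ^N: (1/c) · I_m(u,g) ≤ ‖u^{(m+1)/2} − g^{(m+1)/2}‖² ≤ c · I_m(u,g). In particular I_m(u,g) ≥ 0. -/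
open scoped RealInnerProductSpace

noncomputable section

/-- The boundary term `I_m(u,g) := (1/(m+1))·(‖u‖^{m+1} − ‖g‖^{m+1}) − g^m · (u − g)`. -/
def Ifun {N : ℕ} (m : ℝ) (u g : EuclideanSpace ℝ (Fin N)) : ℝ :=
  (1 / (m + 1)) * (‖u‖ ^ (m + 1) - ‖g‖ ^ (m + 1)) - ⟪vpow m g, u - g⟫

private lemma rpow_half_mul_self {X : ℝ} (hX : 0 ≤ X) :
    X ^ ((1:ℝ)/2) * X ^ ((1:ℝ)/2) = X := by
  rw [← Real.rpow_add' hX (by norm_num)]; norm_num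

/-- `2·√X·√Y ≤ X + Y` in rpow form. -/
private lemma gm_sq {X Y : ℝ} (hX : 0 ≤ X) (hY : 0 ≤ Y) :
    2 * (X ^ ((1:ℝ)/2) * Y ^ ((1:ℝ)/2)) ≤ X + Y := by
  nlinarith [sq_nonneg (X ^ ((1:ℝ)/2) - Y ^ ((1:ℝ)/2)), rpow_half_mul_self hX,
    rpow_half_mul_self hY]

/-- Upper bound: weighted AM-GM gap is at most `(√X−√Y)²`. -/
private lemma keyA {θ X Y : ℝ} (h0 : 0 < θ) (h1 : θ < 1) (hX : 0 ≤ X) (hY : 0 ≤ Y) :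
    θ * X + (1 - θ) * Y - X ^ θ * Y ^ (1 - θ) ≤
      X + Y - 2 * (X ^ ((1:ℝ)/2) * Y ^ ((1:ℝ)/2)) := by
  have g1 : X ^ (1 - θ) * Y ^ θ ≤ (1 - θ) * X + θ * Y :=
    Real.geom_mean_le_arith_mean2_weighted (by linarith) h0.le hX hY (by ring)
  have hu : 0 ≤ X ^ (1 - θ) * Y ^ θ := by positivity
  have hv : 0 ≤ X ^ θ * Y ^ (1 - θ) := by positivity
  have hW : 0 ≤ X ^ ((1:ℝ)/2) * Y ^ ((1:ℝ)/2) := by positivity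
  have eX : X ^ (1 - θ) * X ^ θ = X := by
    rw [← Real.rpow_add' hX (by intro h; linarith)]
    rw [show 1 - θ + θ = 1 by ring, Real.rpow_one]
  have eY : Y ^ θ * Y ^ (1 - θ) = Y := by
    rw [← Real.rpow_add' hY (by intro h; linarith)]
    rw [show θ + (1 - θ) = 1 by ring, Real.rpow_one]
  have huv : (X ^ (1 - θ) * Y ^ θ) * (X ^ θ * Y ^ (1 - θ)) =
      (X ^ ((1:ℝ)/2) * Y ^ ((1:ℝ)/2)) ^ 2 := by
    calc (X ^ (1 - θ) * Y ^ θ) * (X ^ θ * Y ^ (1 - θ))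
        = (X ^ (1 - θ) * X ^ θ) * (Y ^ θ * Y ^ (1 - θ)) := by ring
      _ = X * Y := by rw [eX, eY]
      _ = (X ^ ((1:ℝ)/2) * X ^ ((1:ℝ)/2)) * (Y ^ ((1:ℝ)/2) * Y ^ ((1:ℝ)/2)) := by
          rw [rpow_half_mul_self hX, rpow_half_mul_self hY]
      _ = (X ^ ((1:ℝ)/2) * Y ^ ((1:ℝ)/2)) ^ 2 := by ring
  have g2 : 2 * (X ^ ((1:ℝ)/2) * Y ^ ((1:ℝ)/2)) ≤
      X ^ (1 - θ) * Y ^ θ + X ^ θ * Y ^ (1 - θ) := by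
    nlinarith [sq_nonneg (X ^ (1 - θ) * Y ^ θ - X ^ θ * Y ^ (1 - θ)), huv, hu, hv, hW,
      sq_nonneg (X ^ (1 - θ) * Y ^ θ + X ^ θ * Y ^ (1 - θ) - 2 * (X ^ ((1:ℝ)/2) * Y ^ ((1:ℝ)/2)))]
  linarith [g1, g2]

/-- Lower bound: weighted AM-GM gap dominates `min θ (1−θ) · (√X−√Y)²`. -/
private lemma keyB {θ X Y : ℝ} (h0 : 0 < θ) (h1 : θ < 1) (hX : 0 ≤ X) (hY : 0 ≤ Y) :
    min θ (1 - θ) * (X + Y - 2 * (X ^ ((1:ℝ)/2) * Y ^ ((1:ℝ)/2))) ≤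
      θ * X + (1 - θ) * Y - X ^ θ * Y ^ (1 - θ) := by
  set l := min θ (1 - θ) with hl
  have hl1 : l ≤ θ := min_le_left _ _
  have hl2 : l ≤ 1 - θ := min_le_right _ _
  have hl0 : 0 < l := lt_min h0 (by linarith)
  have hW : 0 ≤ X ^ ((1:ℝ)/2) * Y ^ ((1:ℝ)/2) := by positivity
  have h3 := Real.geom_mean_le_arith_mean3_weighted (by linarith : (0:ℝ) ≤ θ - l)
    (by linarith : (0:ℝ) ≤ 1 - θ - l) (by linarith : (0:ℝ) ≤ 2*l) hX hY hW (by ring)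
  have eW : (X ^ ((1:ℝ)/2) * Y ^ ((1:ℝ)/2)) ^ (2*l) = X ^ l * Y ^ l := by
    rw [Real.mul_rpow (by positivity) (by positivity), ← Real.rpow_mul hX, ← Real.rpow_mul hY,
      show (1:ℝ)/2*(2*l) = l by ring]
  have eX : X ^ (θ - l) * X ^ l = X ^ θ := by
    rw [← Real.rpow_add' hX (by intro h; simp at h; linarith), show θ - l + l = θ by ring]
  have eY : Y ^ (1 - θ - l) * Y ^ l = Y ^ (1 - θ) := by
    rw [← Real.rpow_add' hY (by intro h; simp at h; linarith),
      show 1 - θ - l + l = 1 - θ by ring]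
  rw [eW] at h3
  have lhs_eq : X ^ (θ - l) * Y ^ (1 - θ - l) * (X ^ l * Y ^ l) = X ^ θ * Y ^ (1 - θ) := by
    calc X ^ (θ - l) * Y ^ (1 - θ - l) * (X ^ l * Y ^ l)
        = (X ^ (θ - l) * X ^ l) * (Y ^ (1 - θ - l) * Y ^ l) := by ring
      _ = X ^ θ * Y ^ (1 - θ) := by rw [eX, eY]
  rw [lhs_eq] at h3
  linarith [h3]

private lemma rpow_sub_one_mul_self {b t : ℝ} (hb : 0 ≤ b) (ht : t ≠ 0) :
    b ^ (t - 1) * b = b ^ t := by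
  rcases hb.eq_or_lt with h | h
  · rw [← h]; simp [Real.zero_rpow ht]
  · nth_rewrite 2 [← Real.rpow_one b]
    rw [← Real.rpow_add h, sub_add_cancel]

private lemma nonneg_factor {k z : ℝ} (hk : 0 < k) (h : 0 ≤ k * z) : 0 ≤ z := by
  by_contra hz
  push_neg at hz
  nlinarith [mul_pos hk (neg_pos.mpr hz)]

private lemma one_div_mul_le {c I D : ℝ} (hc : 0 < c) (h : I ≤ c * D) : (1/c) * I ≤ D := by
  rw [div_mul_eq_mul_div, div_le_iff₀ hc]; linarith

section Aux
variable {N : ℕ}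

private lemma norm_vpow_sq {s : ℝ} (hs : s ≠ 0) (x : EuclideanSpace ℝ (Fin N)) :
    ‖vpow (s/2) x‖ ^ 2 = ‖x‖ ^ s := by
  have hx : (0:ℝ) ≤ ‖x‖ := norm_nonneg x
  have h1 : ‖vpow (s/2) x‖ = ‖x‖ ^ (s/2 - 1) * ‖x‖ := by
    rw [vpow, norm_smul, Real.norm_eq_abs, abs_of_nonneg (Real.rpow_nonneg hx _)]
  have hs2 : s/2 ≠ 0 := div_ne_zero hs two_ne_zero
  rw [h1, rpow_sub_one_mul_self hx hs2, sq, ← Real.rpow_add' hx (by rw [show s/2 + s/2 = s by ring]; exact hs),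
    show s/2 + s/2 = s by ring]

private lemma inner_vpow {s : ℝ} (x y : EuclideanSpace ℝ (Fin N)) :
    ⟪vpow (s/2) x, vpow (s/2) y⟫ = (‖x‖ ^ (s/2 - 1) * ‖y‖ ^ (s/2 - 1)) * ⟪x, y⟫ := by
  rw [vpow, vpow, real_inner_smul_left, real_inner_smul_right]; ring

end Aux

set_option maxHeartbeats 1600000 in
/-- For every `m > 0` there is `c = c(m) ≥ 1` with
`(1/c)·I_m(u,g) ≤ ‖u^{(m+1)/2} − g^{(m+1)/2}‖² ≤ c·I_m(u,g)` for all `u, g ∈ ℝ^N`;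
in particular `I_m(u,g) ≥ 0`. -/
theorem boundary_term_comparison {N : ℕ} (hN : 1 ≤ N) (m : ℝ) (hm : 0 < m) :
    ∃ c : ℝ, 1 ≤ c ∧ ∀ u g : EuclideanSpace ℝ (Fin N),
      (1 / c) * Ifun m u g ≤ ‖vpow ((m + 1) / 2) u - vpow ((m + 1) / 2) g‖ ^ 2 ∧
      ‖vpow ((m + 1) / 2) u - vpow ((m + 1) / 2) g‖ ^ 2 ≤ c * Ifun m u g ∧
      0 ≤ Ifun m u g := by
  have hp1 : (1:ℝ) < m + 1 := by linarith
  set p : ℝ := m + 1 with hpdef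
  have hp0 : 0 < p := by linarith
  set θ : ℝ := 1/p with hθdef
  have hθ0 : 0 < θ := by rw [hθdef]; exact one_div_pos.mpr hp0
  have hθ1 : θ < 1 := by rw [hθdef, div_lt_one hp0]; linarith
  set l : ℝ := min θ (1 - θ) with hldef
  have hl1 : l ≤ θ := min_le_left _ _
  have hl2 : l ≤ 1 - θ := min_le_right _ _
  have hl0 : 0 < l := lt_min hθ0 (by linarith)
  set c : ℝ := 2/l with hcdef
  have hc0 : 0 < c := by rw [hcdef]; exact div_pos two_pos hl0
  have hc1 : 1 ≤ c := by rw [hcdef, le_div_iff₀ hl0]; linarith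
  have hc4 : 2 ≤ c := by rw [hcdef, le_div_iff₀ hl0]; linarith
  clear_value c
  refine ⟨c, hc1, fun u g => ?_⟩
  set a : ℝ := ‖u‖ with hadef
  set b : ℝ := ‖g‖ with hbdef
  have ha : 0 ≤ a := norm_nonneg u
  have hb : 0 ≤ b := norm_nonneg g
  set τ : ℝ := ⟪u, g⟫ with hτdef
  clear_value a b τ
  set X : ℝ := a ^ p with hXdef
  set Y : ℝ := b ^ p with hYdef
  have hX : 0 ≤ X := Real.rpow_nonneg ha p
  have hY : 0 ≤ Y := Real.rpow_nonneg hb p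
  clear_value X Y
  -- translations of the GM terms
  have hpθ : p * θ = 1 := by rw [hθdef, mul_one_div, div_self hp0.ne']
  have hpθ' : p * (1 - θ) = p - 1 := by rw [mul_sub, mul_one, hpθ]
  have tG : X ^ θ * Y ^ (1 - θ) = a * b ^ (p - 1) := by
    rw [hXdef, hYdef, ← Real.rpow_mul ha, ← Real.rpow_mul hb, hpθ, hpθ', Real.rpow_one]
  have tW : X ^ ((1:ℝ)/2) * Y ^ ((1:ℝ)/2) = a ^ (p/2) * b ^ (p/2) := by
    rw [hXdef, hYdef, ← Real.rpow_mul ha, ← Real.rpow_mul hb, show p * ((1:ℝ)/2) = p/2 by ring]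
  -- scalar endpoint inequalities
  have E0 : 2 * (a ^ (p/2) * b ^ (p/2)) ≤ X + Y := by
    have := gm_sq hX hY; rwa [tW] at this
  have E1 : θ * X + (1 - θ) * Y - a * b ^ (p - 1) ≤ X + Y - 2 * (a ^ (p/2) * b ^ (p/2)) := by
    have := keyA hθ0 hθ1 hX hY; rwa [tG, tW] at this
  have E2 : l * (X + Y - 2 * (a ^ (p/2) * b ^ (p/2))) ≤ θ * X + (1 - θ) * Y - a * b ^ (p - 1) := by
    have := keyB hθ0 hθ1 hX hY; rwa [tG, tW, ← hldef] at this
  have Eam : a * b ^ (p - 1) ≤ θ * X + (1 - θ) * Y := by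
    have h : X ^ θ * Y ^ (1 - θ) ≤ θ * X + (1 - θ) * Y :=
      Real.geom_mean_le_arith_mean2_weighted hθ0.le (by linarith) hX hY (by ring)
    rwa [tG] at h
  have Eg : 0 ≤ a * b ^ (p - 1) := mul_nonneg ha (Real.rpow_nonneg hb _)
  have EW : 0 ≤ a ^ (p/2) * b ^ (p/2) :=
    mul_nonneg (Real.rpow_nonneg ha _) (Real.rpow_nonneg hb _)
  have hDp0 : 0 ≤ X + Y - 2 * (a ^ (p/2) * b ^ (p/2)) := by linarith
  have hDm0 : 0 ≤ X + Y + 2 * (a ^ (p/2) * b ^ (p/2)) := by linarith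
  have hJp0 : 0 ≤ θ * X + (1 - θ) * Y - a * b ^ (p - 1) :=
    le_trans (mul_nonneg hl0.le hDp0) E2
  -- the four endpoint comparisons with constant c
  have F1 : X + Y - 2 * (a ^ (p/2) * b ^ (p/2)) ≤ c * (θ * X + (1 - θ) * Y - a * b ^ (p - 1)) := by
    have h := mul_le_mul_of_nonneg_left E2 (div_pos two_pos hl0).le
    have e : (2/l) * (l * (X + Y - 2 * (a ^ (p/2) * b ^ (p/2))))
        = (l/l) * (2 * (X + Y - 2 * (a ^ (p/2) * b ^ (p/2)))) := by ring
    rw [div_self hl0.ne', one_mul] at e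
    rw [e] at h
    rw [hcdef]; linarith
  have F2 : θ * X + (1 - θ) * Y + a * b ^ (p - 1)
      ≤ c * (X + Y + 2 * (a ^ (p/2) * b ^ (p/2))) := by
    have h1 : 0 ≤ (1 - θ) * X := mul_nonneg (by linarith) hX
    have h2 : 0 ≤ θ * Y := mul_nonneg hθ0.le hY
    have h3 : 0 ≤ (c - 2) * (X + Y + 2 * (a ^ (p/2) * b ^ (p/2))) :=
      mul_nonneg (by linarith) hDm0
    linarith [Eam, EW]
  have F3 : θ * X + (1 - θ) * Y - a * b ^ (p - 1)
      ≤ c * (X + Y - 2 * (a ^ (p/2) * b ^ (p/2))) := by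
    have h3 : 0 ≤ (c - 1) * (X + Y - 2 * (a ^ (p/2) * b ^ (p/2))) :=
      mul_nonneg (by linarith) hDp0
    linarith [E1]
  have F4 : X + Y + 2 * (a ^ (p/2) * b ^ (p/2))
      ≤ c * (θ * X + (1 - θ) * Y + a * b ^ (p - 1)) := by
    have h1 : l * (X + Y) ≤ θ * X + (1 - θ) * Y + a * b ^ (p - 1) := by
      linarith [mul_nonneg (by linarith : (0:ℝ) ≤ θ - l) hX,
        mul_nonneg (by linarith : (0:ℝ) ≤ 1 - θ - l) hY, Eg]
    have h2 := mul_le_mul_of_nonneg_left h1 (div_pos two_pos hl0).le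
    have e : (2/l) * (l * (X + Y)) = (l/l) * (2 * (X + Y)) := by ring
    rw [div_self hl0.ne', one_mul] at e
    rw [e] at h2
    rw [hcdef]; linarith
  -- formulas for Ifun and the squared distance
  have hk1 : 0 ≤ b ^ (m - 1) := Real.rpow_nonneg hb _
  have hk1b : b ^ (m - 1) * b ^ 2 = Y := by
    rw [hYdef, pow_two, ← mul_assoc, rpow_sub_one_mul_self hb hm.ne',
      show b ^ m * b = b ^ (p - 1) * b by rw [show p - 1 = m by rw [hpdef]; ring],
      rpow_sub_one_mul_self hb hp0.ne']
  have hI : Ifun m u g = θ * X + (1 - θ) * Y - b ^ (m - 1) * τ := by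
    rw [Ifun, vpow, real_inner_smul_left, inner_sub_right, real_inner_self_eq_norm_sq,
      real_inner_comm u g]
    rw [← hadef, ← hbdef, ← hτdef, ← hpdef, ← hXdef, ← hYdef, ← hθdef]
    linear_combination hk1b
  have r1 : b ^ (m - 1) * (a * b) = a * b ^ (p - 1) := by
    rw [show b ^ (m - 1) * (a * b) = (b ^ (m - 1) * b) * a by ring, rpow_sub_one_mul_self hb hm.ne',
      show b ^ m = b ^ (p - 1) by rw [show p - 1 = m by rw [hpdef]; ring]]
    ring
  have r2 : (a ^ (p/2 - 1) * b ^ (p/2 - 1)) * (a * b) = a ^ (p/2) * b ^ (p/2) := by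
    have hp2 : p/2 ≠ 0 := div_ne_zero hp0.ne' two_ne_zero
    rw [show (a ^ (p/2 - 1) * b ^ (p/2 - 1)) * (a * b)
        = (a ^ (p/2 - 1) * a) * (b ^ (p/2 - 1) * b) by ring,
      rpow_sub_one_mul_self ha hp2, rpow_sub_one_mul_self hb hp2]
  have hD : ‖vpow (p/2) u - vpow (p/2) g‖ ^ 2
      = X + Y - 2 * ((a ^ (p/2 - 1) * b ^ (p/2 - 1)) * τ) := by
    have hid := norm_sub_sq_real (vpow (p/2) u) (vpow (p/2) g)
    rw [norm_vpow_sq hp0.ne' u, norm_vpow_sq hp0.ne' g, inner_vpow u g] at hid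
    rw [hid, ← hadef, ← hbdef, ← hτdef, ← hXdef, ← hYdef]
    ring
  -- Cauchy–Schwarz
  have hCS1 : τ ≤ a * b := by
    have := real_inner_le_norm u g; rwa [← hadef, ← hbdef, ← hτdef] at this
  have hCS2 : -(a * b) ≤ τ := by
    have h := abs_real_inner_le_norm u g
    rw [← hadef, ← hbdef, ← hτdef] at h
    linarith [neg_abs_le τ]
  have hab0 : 0 ≤ a * b := mul_nonneg ha hb
  rcases hab0.eq_or_lt with hab | hab
  · -- degenerate case: a*b = 0, hence τ = 0 and all GM terms vanish
    have hτ0 : τ = 0 := le_antisymm (by linarith) (by linarith)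
    have hG0 : a * b ^ (p - 1) = 0 ∧ a ^ (p/2) * b ^ (p/2) = 0 := by
      rcases mul_eq_zero.mp hab.symm with h | h
      · refine ⟨by rw [h]; ring, ?_⟩
        rw [h, Real.zero_rpow (div_ne_zero hp0.ne' two_ne_zero)]; ring
      · refine ⟨?_, ?_⟩
        · rw [h, Real.zero_rpow (show p - 1 ≠ 0 by rw [hpdef]; simpa using hm.ne')]; ring
        · rw [h, Real.zero_rpow (div_ne_zero hp0.ne' two_ne_zero)]; ring
    obtain ⟨hG, hW⟩ := hG0
    rw [hG] at F1 F3 hJp0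
    rw [hW] at F1 F3
    refine ⟨?_, ?_, ?_⟩
    · apply one_div_mul_le hc0
      rw [hI, hD, hτ0]
      linarith [F3]
    · rw [hI, hD, hτ0]
      linarith [F1]
    · rw [hI, hτ0]
      linarith [hJp0]
  · -- main case: a*b > 0, convex combination of endpoint inequalities
    have hP1 : 0 ≤ a * b + τ := by linarith
    have hP2 : 0 ≤ a * b - τ := by linarith
    refine ⟨?_, ?_, ?_⟩
    · apply one_div_mul_le hc0
      rw [hI, hD]
      have hid : 2*(a*b) * (c * (X + Y - 2*((a ^ (p/2 - 1) * b ^ (p/2 - 1)) * τ))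
            - (θ*X + (1-θ)*Y - b ^ (m-1) * τ))
          = (a*b + τ) * (c * (X + Y - 2*(a ^ (p/2) * b ^ (p/2))) - (θ*X + (1-θ)*Y - a * b ^ (p-1)))
            + (a*b - τ) * (c * (X + Y + 2*(a ^ (p/2) * b ^ (p/2))) - (θ*X + (1-θ)*Y + a * b ^ (p-1))) := by
        rw [← r1, ← r2]; ring
      have hkey : 0 ≤ 2*(a*b) * (c * (X + Y - 2*((a ^ (p/2 - 1) * b ^ (p/2 - 1)) * τ))
            - (θ*X + (1-θ)*Y - b ^ (m-1) * τ)) := by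
        rw [hid]
        exact add_nonneg
          (mul_nonneg hP1 (by linarith [F3]))
          (mul_nonneg hP2 (by linarith [F2]))
      have hfin := nonneg_factor (by linarith : (0:ℝ) < 2*(a*b)) hkey
      linarith [hfin]
    · rw [hI, hD]
      have hid : 2*(a*b) * (c * (θ*X + (1-θ)*Y - b ^ (m-1) * τ)
            - (X + Y - 2*((a ^ (p/2 - 1) * b ^ (p/2 - 1)) * τ)))
          = (a*b + τ) * (c * (θ*X + (1-θ)*Y - a * b ^ (p-1)) - (X + Y - 2*(a ^ (p/2) * b ^ (p/2))))
            + (a*b - τ) * (c * (θ*X + (1-θ)*Y + a * b ^ (p-1)) - (X + Y + 2*(a ^ (p/2) * b ^ (p/2)))) := by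
        rw [← r1, ← r2]; ring
      have hkey : 0 ≤ 2*(a*b) * (c * (θ*X + (1-θ)*Y - b ^ (m-1) * τ)
            - (X + Y - 2*((a ^ (p/2 - 1) * b ^ (p/2 - 1)) * τ))) := by
        rw [hid]
        exact add_nonneg
          (mul_nonneg hP1 (by linarith [F1]))
          (mul_nonneg hP2 (by linarith [F4]))
      have hfin := nonneg_factor (by linarith : (0:ℝ) < 2*(a*b)) hkey
      linarith [hfin]
    · rw [hI]
      have hmono : b ^ (m-1) * τ ≤ b ^ (m-1) * (a*b) := mul_le_mul_of_nonneg_left hCS1 hk1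
      rw [r1] at hmono
      linarith [hJp0]

end
end

section
/- For every m > 0 there exists a constant c = c(m) ≥ 1 such that for all u, g ∈ ℝ^N: (1/c) · ‖u^m − g^m‖ ≤ (‖u‖ + ‖g‖)^{m−1} · ‖u − g‖ ≤ c · ‖u^m − g^m‖, with the convention that 0 raised to a negative real power equals 0 (relevant only when u = g = 0 and m < 1, in which case all three quantities vanish). -/
noncomputable section

section VpowHelpers

open Real

lemma vpow_norm_eq {N : ℕ} (m : ℝ) (hm : 0 < m) (x : EuclideanSpace ℝ (Fin N)) :
    ‖vpow m x‖ = ‖x‖ ^ m := by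
  rcases eq_or_ne x 0 with rfl | hx
  · simp [vpow, Real.zero_rpow hm.ne']
  · have h : (0:ℝ) < ‖x‖ := norm_pos_iff.mpr hx
    rw [vpow, norm_smul, Real.norm_eq_abs, abs_of_nonneg (Real.rpow_nonneg h.le _),
      ← Real.rpow_add_one h.ne']
    norm_num

lemma vpow_vpow {N : ℕ} (m : ℝ) (hm : 0 < m) (x : EuclideanSpace ℝ (Fin N)) :
    vpow (1/m) (vpow m x) = x := by
  rcases eq_or_ne x 0 with rfl | hx
  · simp [vpow]
  · have h : (0:ℝ) < ‖x‖ := norm_pos_iff.mpr hx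
    rw [vpow, vpow_norm_eq m hm, vpow, smul_smul, ← Real.rpow_mul h.le,
      ← Real.rpow_add h]
    have : m * (1 / m - 1) + (m - 1) = 0 := by field_simp; ring
    rw [this, Real.rpow_zero, one_smul]

lemma conv_ineq {s a b : ℝ} (hs : 1 ≤ s) (hb : 0 ≤ b) (hab : b ≤ a) (ha : 0 < a) :
    a ^ s - b ^ s ≤ s * a ^ s * ((a - b) / a) := by
  have h := one_add_mul_self_le_rpow_one_add (s := (b - a) / a)
    (by rw [neg_le, ← neg_div, neg_sub, div_le_one ha]; linarith) hs
  have e1 : (1:ℝ) + (b - a) / a = b / a := by field_simp; ring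
  rw [e1, Real.div_rpow hb ha.le] at h
  rw [le_div_iff₀ (Real.rpow_pos_of_pos ha s)] at h
  have e2 : (1 + s * ((b - a) / a)) * a ^ s
      = a ^ s - s * a ^ s * ((a - b) / a) := by ring
  linarith [e2 ▸ h]

lemma conc_ineq {s a b : ℝ} (hs0 : 0 ≤ s) (hs1 : s ≤ 1) (hb : 0 < b) (hab : b ≤ a) :
    a ^ s - b ^ s ≤ s * b ^ s * ((a - b) / b) := by
  have h := rpow_one_add_le_one_add_mul_self (s := (a - b) / b)
    (le_trans (by norm_num) (div_nonneg (by linarith) hb.le)) hs0 hs1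
  have e1 : (1:ℝ) + (a - b) / b = a / b := by field_simp; ring
  rw [e1, Real.div_rpow (hb.le.trans hab) hb.le] at h
  rw [div_le_iff₀ (Real.rpow_pos_of_pos hb s)] at h
  have e2 : (1 + s * ((a - b) / b)) * b ^ s
      = b ^ s + s * b ^ s * ((a - b) / b) := by ring
  linarith [e2 ▸ h]

lemma scalar_comparison (m : ℝ) (hm : 0 < m) : ∃ C : ℝ, 1 ≤ C ∧ ∀ a b : ℝ, 0 ≤ b → b ≤ a →
    a ^ (m-1) ≤ C * (a+b) ^ (m-1) ∧
    |a ^ (m-1) - b ^ (m-1)| * b ≤ C * ((a+b) ^ (m-1) * (a-b)) := by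
  rcases le_or_gt 1 m with hm1 | hm1
  · refine ⟨m + 1, by linarith, fun a b hb hab => ?_⟩
    have ha : 0 ≤ a := hb.trans hab
    have hs : 0 ≤ m - 1 := by linarith
    have hpow : a ^ (m-1) ≤ (a+b) ^ (m-1) :=
      Real.rpow_le_rpow ha (by linarith) hs
    have hpownn : (0:ℝ) ≤ (a+b) ^ (m-1) := Real.rpow_nonneg (by linarith) _
    constructor
    · nlinarith [Real.rpow_nonneg ha (m-1)]
    · have hmono : b ^ (m-1) ≤ a ^ (m-1) := Real.rpow_le_rpow hb hab hs
      rw [abs_of_nonneg (by linarith)]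
      rcases hb.eq_or_lt with rfl | hb0
      · simp
        positivity
      · have ha0 : 0 < a := lt_of_lt_of_le hb0 hab
        have key : (a ^ (m-1) - b ^ (m-1)) * b ≤ (m-1) * ((a+b)^(m-1) * (a-b)) := by
          rcases le_or_gt 1 (m-1) with hs1 | hs1
          · have h := conv_ineq hs1 hb hab ha0
            calc (a ^ (m-1) - b ^ (m-1)) * b ≤ (m-1) * a^(m-1) * ((a-b)/a) * b :=
                  mul_le_mul_of_nonneg_right h hb
              _ = (m-1) * a^(m-1) * (a-b) * (b/a) := by ring
              _ ≤ (m-1) * a^(m-1) * (a-b) * 1 := by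
                  apply mul_le_mul_of_nonneg_left ((div_le_one ha0).mpr hab)
                  exact mul_nonneg (mul_nonneg hs (Real.rpow_nonneg ha _)) (by linarith)
              _ = (m-1) * (a^(m-1) * (a-b)) := by ring
              _ ≤ (m-1) * ((a+b)^(m-1) * (a-b)) := by
                  apply mul_le_mul_of_nonneg_left _ hs
                  exact mul_le_mul_of_nonneg_right hpow (by linarith)
          · have h := conc_ineq hs hs1.le hb0 hab
            have hpb : b ^ (m-1) ≤ (a+b) ^ (m-1) :=
              Real.rpow_le_rpow hb (by linarith) hs
            calc (a ^ (m-1) - b ^ (m-1)) * b ≤ (m-1) * b^(m-1) * ((a-b)/b) * b :=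
                  mul_le_mul_of_nonneg_right h hb
              _ = (m-1) * (b^(m-1) * (a-b)) := by field_simp
              _ ≤ (m-1) * ((a+b)^(m-1) * (a-b)) := by
                  apply mul_le_mul_of_nonneg_left _ hs
                  exact mul_le_mul_of_nonneg_right hpb (by linarith)
        have : (0:ℝ) ≤ (a+b)^(m-1) * (a-b) := mul_nonneg hpownn (by linarith)
        nlinarith
  · refine ⟨4, by norm_num, fun a b hb hab => ?_⟩
    have ha : 0 ≤ a := hb.trans hab
    have hsneg : m - 1 < 0 := by linarith
    rcases ha.eq_or_lt with rfl | ha0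
    · have hb0 : b = 0 := le_antisymm (hab.trans_eq rfl.symm) hb
      subst hb0
      simp [Real.zero_rpow hsneg.ne]
    · have hfirst : a ^ (m-1) ≤ 2 * (a+b) ^ (m-1) := by
        have h1 : ((2:ℝ)*a) ^ (m-1) ≤ (a+b) ^ (m-1) :=
          Real.rpow_le_rpow_of_nonpos (by linarith) (by linarith) hsneg.le
        rw [Real.mul_rpow (by norm_num) ha0.le] at h1
        have h2 : a ^ (m-1) = (2:ℝ)^(-(m-1)) * ((2:ℝ)^(m-1) * a^(m-1)) := by
          rw [← mul_assoc, ← Real.rpow_add (by norm_num : (0:ℝ) < 2)]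
          norm_num
        have h3 : ((2:ℝ))^(-(m-1)) ≤ 2 := by
          calc ((2:ℝ))^(-(m-1)) ≤ (2:ℝ)^(1:ℝ) :=
                Real.rpow_le_rpow_of_exponent_le one_le_two (by linarith)
            _ = 2 := Real.rpow_one 2
        calc a ^ (m-1) = (2:ℝ)^(-(m-1)) * ((2:ℝ)^(m-1) * a^(m-1)) := h2
          _ ≤ (2:ℝ)^(-(m-1)) * (a+b)^(m-1) := by
              exact mul_le_mul_of_nonneg_left h1 (by positivity)
          _ ≤ 2 * (a+b)^(m-1) := by
              exact mul_le_mul_of_nonneg_right h3 (Real.rpow_nonneg (by linarith) _)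
      have hpownn : (0:ℝ) ≤ (a+b) ^ (m-1) := Real.rpow_nonneg (by linarith) _
      constructor
      · linarith
      · rcases hb.eq_or_lt with rfl | hb0
        · simp
          positivity
        · have hmono : a ^ (m-1) ≤ b ^ (m-1) :=
            Real.rpow_le_rpow_of_nonpos hb0 hab hsneg.le
          rw [abs_of_nonpos (by linarith), neg_sub]
          set σ := 1 - m with hσ
          have hσ0 : 0 ≤ σ := by rw [hσ]; linarith
          have hσ1 : σ ≤ 1 := by rw [hσ]; linarith
          have ea : a ^ σ * a ^ (m-1) = 1 := by
            rw [← Real.rpow_add ha0, show σ + (m-1) = 0 by rw [hσ]; ring, Real.rpow_zero]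
          have eb : b ^ σ * b ^ (m-1) = 1 := by
            rw [← Real.rpow_add hb0, show σ + (m-1) = 0 by rw [hσ]; ring, Real.rpow_zero]
          have iden : (b ^ (m-1) - a ^ (m-1)) * b
              = (a ^ σ - b ^ σ) * (a ^ (m-1) * b ^ (m-1)) * b := by
            have : (a ^ σ - b ^ σ) * (a ^ (m-1) * b ^ (m-1))
                = b ^ (m-1) - a ^ (m-1) := by
              linear_combination b ^ (m-1) * ea - a ^ (m-1) * eb
            rw [this]
          have h := conc_ineq hσ0 hσ1 hb0 hab
          have habs : 0 ≤ a ^ (m-1) * b ^ (m-1) * b := by positivity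
          have step : (a ^ σ - b ^ σ) * (a ^ (m-1) * b ^ (m-1)) * b
              ≤ σ * b ^ σ * ((a-b)/b) * (a ^ (m-1) * b ^ (m-1) * b) := by
            calc (a ^ σ - b ^ σ) * (a ^ (m-1) * b ^ (m-1)) * b
                = (a ^ σ - b ^ σ) * (a ^ (m-1) * b ^ (m-1) * b) := by ring
              _ ≤ σ * b ^ σ * ((a-b)/b) * (a ^ (m-1) * b ^ (m-1) * b) :=
                  mul_le_mul_of_nonneg_right h habs
          have rhs_eq : σ * b ^ σ * ((a-b)/b) * (a ^ (m-1) * b ^ (m-1) * b)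
              = σ * (a-b) * a ^ (m-1) * (b ^ σ * b ^ (m-1)) := by
            field_simp
          rw [rhs_eq, eb, mul_one] at step
          rw [iden]
          calc (a ^ σ - b ^ σ) * (a ^ (m-1) * b ^ (m-1)) * b
              ≤ σ * (a-b) * a ^ (m-1) := step
            _ ≤ 1 * (a-b) * (2 * (a+b)^(m-1)) := by
                apply mul_le_mul
                · apply mul_le_mul_of_nonneg_right hσ1 (by linarith)
                · exact hfirst
                · positivity
                · nlinarith
            _ ≤ 4 * ((a+b)^(m-1) * (a-b)) := by nlinarith

lemma key_aux {N : ℕ} (m : ℝ) (C : ℝ)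
    (hC : ∀ a b : ℝ, 0 ≤ b → b ≤ a →
      a ^ (m-1) ≤ C * (a+b) ^ (m-1) ∧
      |a ^ (m-1) - b ^ (m-1)| * b ≤ C * ((a+b) ^ (m-1) * (a-b)))
    (u g : EuclideanSpace ℝ (Fin N)) (hug : ‖g‖ ≤ ‖u‖) :
    ‖(‖u‖ ^ (m-1) : ℝ) • u - (‖g‖ ^ (m-1) : ℝ) • g‖
      ≤ 2 * C * ((‖u‖ + ‖g‖) ^ (m-1) * ‖u - g‖) := by
  set a := ‖u‖ with ha
  set b := ‖g‖ with hb
  obtain ⟨h1, h2⟩ := hC a b (norm_nonneg g) hug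
  have decomp : (a ^ (m-1) : ℝ) • u - (b ^ (m-1) : ℝ) • g
      = (a ^ (m-1) : ℝ) • (u - g) + ((a ^ (m-1) : ℝ) - b ^ (m-1)) • g := by
    rw [smul_sub, sub_smul]; abel
  have hnn : (0:ℝ) ≤ (a + b) ^ (m-1) := Real.rpow_nonneg (by positivity) _
  have hd : a - b ≤ ‖u - g‖ := by
    have := norm_sub_norm_le u g; linarith
  calc ‖(a ^ (m-1) : ℝ) • u - (b ^ (m-1) : ℝ) • g‖
      ≤ ‖(a ^ (m-1) : ℝ) • (u - g)‖ + ‖((a ^ (m-1) : ℝ) - b ^ (m-1)) • g‖ := by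
        rw [decomp]; exact norm_add_le _ _
    _ = a ^ (m-1) * ‖u - g‖ + |(a ^ (m-1) : ℝ) - b ^ (m-1)| * b := by
        rw [norm_smul, norm_smul, Real.norm_eq_abs, Real.norm_eq_abs,
          abs_of_nonneg (Real.rpow_nonneg (norm_nonneg u) _)]
    _ ≤ C * (a+b) ^ (m-1) * ‖u - g‖ + C * ((a+b) ^ (m-1) * (a - b)) := by
        have := mul_le_mul_of_nonneg_right h1 (norm_nonneg (u - g))
        linarith
    _ ≤ C * (a+b) ^ (m-1) * ‖u - g‖ + C * ((a+b) ^ (m-1) * ‖u - g‖) := by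
        have hC0 : (0:ℝ) ≤ C := by
          by_contra hcon
          push_neg at hcon
          nlinarith [hC 1 0 le_rfl zero_le_one, Real.rpow_nonneg (by norm_num : (0:ℝ) ≤ 1+0) (m-1),
            Real.one_rpow (m-1)]
        have := mul_le_mul_of_nonneg_left (mul_le_mul_of_nonneg_left hd hnn) hC0
        linarith
    _ = 2 * C * ((a + b) ^ (m-1) * ‖u - g‖) := by ring

lemma keyvec {N : ℕ} (m : ℝ) (hm : 0 < m) :
    ∃ C : ℝ, 1 ≤ C ∧ ∀ u g : EuclideanSpace ℝ (Fin N),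
      ‖vpow m u - vpow m g‖ ≤ C * ((‖u‖ + ‖g‖) ^ (m-1) * ‖u - g‖) := by
  obtain ⟨C, hC1, hC⟩ := scalar_comparison m hm
  refine ⟨2 * C, by linarith, fun u g => ?_⟩
  rcases le_total ‖g‖ ‖u‖ with h | h
  · exact key_aux m C hC u g h
  · calc ‖vpow m u - vpow m g‖ = ‖vpow m g - vpow m u‖ := norm_sub_rev _ _
      _ ≤ 2 * C * ((‖g‖ + ‖u‖) ^ (m-1) * ‖g - u‖) := key_aux m C hC g u h
      _ = 2 * C * ((‖u‖ + ‖g‖) ^ (m-1) * ‖u - g‖) := by rw [norm_sub_rev, add_comm ‖g‖ ‖u‖]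

lemma ratio (m : ℝ) (hm : 0 < m) : ∃ K : ℝ, 1 ≤ K ∧ ∀ a b : ℝ, 0 ≤ a → 0 ≤ b →
    (a+b) ^ (m-1) ≤ K * (a^m + b^m) ^ ((m-1)/m) := by
  have em : m * ((m-1)/m) = m - 1 := by field_simp
  rcases le_or_gt 1 m with hm1 | hm1
  · refine ⟨2 ^ (m-1), ?_, fun a b ha hb => ?_⟩
    · calc (1:ℝ) = 2 ^ (0:ℝ) := (Real.rpow_zero 2).symm
        _ ≤ 2 ^ (m-1) := Real.rpow_le_rpow_of_exponent_le one_le_two (by linarith)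
    · have hab : (0:ℝ) ≤ a + b := by linarith
      have h2 : (a+b)^m ≤ 2^m * (a^m + b^m) := by
        have ham : (0:ℝ) ≤ a^m := Real.rpow_nonneg ha m
        have hbm : (0:ℝ) ≤ b^m := Real.rpow_nonneg hb m
        have h2m : (0:ℝ) ≤ (2:ℝ)^m := by positivity
        rcases le_total a b with hle | hle
        · have : (a+b)^m ≤ ((2:ℝ)*b)^m := Real.rpow_le_rpow hab (by linarith) hm.le
          rw [Real.mul_rpow (by norm_num) hb] at this
          nlinarith
        · have : (a+b)^m ≤ ((2:ℝ)*a)^m := Real.rpow_le_rpow hab (by linarith) hm.le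
          rw [Real.mul_rpow (by norm_num) ha] at this
          nlinarith
      calc (a+b)^(m-1) = ((a+b)^m)^((m-1)/m) := by
            rw [← Real.rpow_mul hab, em]
        _ ≤ (2^m * (a^m + b^m))^((m-1)/m) :=
            Real.rpow_le_rpow (Real.rpow_nonneg hab m) h2
              (div_nonneg (by linarith) hm.le)
        _ = 2^(m-1) * (a^m + b^m)^((m-1)/m) := by
            rw [Real.mul_rpow (by positivity)
              (by positivity : (0:ℝ) ≤ a^m + b^m), ← Real.rpow_mul (by norm_num : (0:ℝ) ≤ 2), em]
  · refine ⟨2 ^ ((1-m)/m), ?_, fun a b ha hb => ?_⟩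
    · calc (1:ℝ) = 2 ^ (0:ℝ) := (Real.rpow_zero 2).symm
        _ ≤ 2 ^ ((1-m)/m) :=
          Real.rpow_le_rpow_of_exponent_le one_le_two (div_nonneg (by linarith) hm.le)
    · rcases eq_or_lt_of_le (by linarith : (0:ℝ) ≤ a + b) with h0 | hab
      · have ha0 : a = 0 := by linarith
        have hb0 : b = 0 := by linarith
        subst ha0; subst hb0
        norm_num [Real.zero_rpow hm.ne', Real.zero_rpow (show m - 1 ≠ 0 by linarith)]
        positivity
      · have h1 : a^m + b^m ≤ 2 * (a+b)^m := by
          have h1a : a^m ≤ (a+b)^m := Real.rpow_le_rpow ha (by linarith) hm.le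
          have h1b : b^m ≤ (a+b)^m := Real.rpow_le_rpow hb (by linarith) hm.le
          linarith
        have hS : (0:ℝ) < a^m + b^m := by
          rcases lt_or_ge 0 a with ha0 | ha0
          · have := Real.rpow_pos_of_pos ha0 m
            have := Real.rpow_nonneg hb m
            linarith
          · have hb0 : 0 < b := by linarith
            have := Real.rpow_pos_of_pos hb0 m
            have := Real.rpow_nonneg ha m
            linarith
        calc (a+b)^(m-1) = ((a+b)^m)^((m-1)/m) := by
              rw [← Real.rpow_mul hab.le, em]
          _ ≤ ((a^m + b^m)/2)^((m-1)/m) := by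
              apply Real.rpow_le_rpow_of_nonpos (by positivity) (by linarith)
              apply div_nonpos_of_nonpos_of_nonneg (by linarith) hm.le
          _ = 2^((1-m)/m) * (a^m + b^m)^((m-1)/m) := by
              rw [Real.div_rpow hS.le (by norm_num : (0:ℝ) ≤ 2), div_eq_mul_inv,
                ← Real.rpow_neg (by norm_num : (0:ℝ) ≤ 2), mul_comm]
              congr 1
              ring

end VpowHelpers

/-- For every `m > 0` there is `c = c(m) ≥ 1` such that for all `u, g ∈ ℝ^N`:
`(1/c)·‖u^m − g^m‖ ≤ (‖u‖ + ‖g‖)^(m−1)·‖u − g‖ ≤ c·‖u^m − g^m‖`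
(here `0` to a negative real power is `0`, as for `Real.rpow`). -/
theorem norm_vpow_sub_comparison {N : ℕ} (hN : 1 ≤ N) (m : ℝ) (hm : 0 < m) :
    ∃ c : ℝ, 1 ≤ c ∧ ∀ u g : EuclideanSpace ℝ (Fin N),
      (1 / c) * ‖vpow m u - vpow m g‖ ≤ (‖u‖ + ‖g‖) ^ (m - 1) * ‖u - g‖ ∧
      (‖u‖ + ‖g‖) ^ (m - 1) * ‖u - g‖ ≤ c * ‖vpow m u - vpow m g‖ := by
  obtain ⟨C₁, hC₁1, hC₁⟩ := keyvec (N := N) m hm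
  obtain ⟨C₂, hC₂1, hC₂⟩ := keyvec (N := N) (1/m) (by positivity)
  obtain ⟨K, hK1, hK⟩ := ratio m hm
  have hc1 : (1:ℝ) ≤ max C₁ (C₂ * K) := le_trans hC₁1 (le_max_left _ _)
  have hc0 : (0:ℝ) < max C₁ (C₂ * K) := lt_of_lt_of_le one_pos hc1
  refine ⟨max C₁ (C₂ * K), hc1, fun u g => ?_⟩
  have hMnn : (0:ℝ) ≤ (‖u‖ + ‖g‖) ^ (m - 1) * ‖u - g‖ := by positivity
  constructor
  · have h1 : ‖vpow m u - vpow m g‖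
        ≤ max C₁ (C₂ * K) * ((‖u‖ + ‖g‖) ^ (m - 1) * ‖u - g‖) :=
      (hC₁ u g).trans (mul_le_mul_of_nonneg_right (le_max_left _ _) hMnn)
    calc (1 / max C₁ (C₂ * K)) * ‖vpow m u - vpow m g‖
        ≤ (1 / max C₁ (C₂ * K)) * (max C₁ (C₂ * K) * ((‖u‖ + ‖g‖) ^ (m - 1) * ‖u - g‖)) :=
          mul_le_mul_of_nonneg_left h1 (by positivity)
      _ = (‖u‖ + ‖g‖) ^ (m - 1) * ‖u - g‖ := by
          field_simp
  · by_cases h0 : u = 0 ∧ g = 0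
    · obtain ⟨rfl, rfl⟩ := h0
      simp [vpow]
    · have hS : (0:ℝ) < ‖u‖^m + ‖g‖^m := by
        rcases not_and_or.mp h0 with hu | hg
        · have : (0:ℝ) < ‖u‖ := norm_pos_iff.mpr hu
          have := Real.rpow_pos_of_pos this m
          have := Real.rpow_nonneg (norm_nonneg g) m
          linarith
        · have : (0:ℝ) < ‖g‖ := norm_pos_iff.mpr hg
          have := Real.rpow_pos_of_pos this m
          have := Real.rpow_nonneg (norm_nonneg u) m
          linarith
      have h2 := hC₂ (vpow m u) (vpow m g)
      rw [vpow_vpow m hm u, vpow_vpow m hm g, vpow_norm_eq m hm u, vpow_norm_eq m hm g] at h2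
      have h3 := hK ‖u‖ ‖g‖ (norm_nonneg u) (norm_nonneg g)
      have hE : (‖u‖^m + ‖g‖^m)^((m-1)/m) * (‖u‖^m + ‖g‖^m)^(1/m - 1) = 1 := by
        rw [← Real.rpow_add hS, show (m-1)/m + (1/m - 1) = 0 by field_simp; ring, Real.rpow_zero]
      have hDnn : (0:ℝ) ≤ ‖vpow m u - vpow m g‖ := norm_nonneg _
      calc (‖u‖ + ‖g‖) ^ (m - 1) * ‖u - g‖
          ≤ (‖u‖ + ‖g‖) ^ (m - 1) *
              (C₂ * ((‖u‖^m + ‖g‖^m)^(1/m - 1) * ‖vpow m u - vpow m g‖)) :=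
            mul_le_mul_of_nonneg_left h2 (by positivity)
        _ ≤ (K * (‖u‖^m + ‖g‖^m)^((m-1)/m)) *
              (C₂ * ((‖u‖^m + ‖g‖^m)^(1/m - 1) * ‖vpow m u - vpow m g‖)) := by
            apply mul_le_mul_of_nonneg_right h3
            positivity
        _ = C₂ * K * ((‖u‖^m + ‖g‖^m)^((m-1)/m) * (‖u‖^m + ‖g‖^m)^(1/m - 1)) *
              ‖vpow m u - vpow m g‖ := by ring
        _ = C₂ * K * ‖vpow m u - vpow m g‖ := by rw [hE]; ring
        _ ≤ max C₁ (C₂ * K) * ‖vpow m u - vpow m g‖ :=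
            mul_le_mul_of_nonneg_right (le_max_right _ _) hDnn

end
end

section
/- For every m > 1 there exists a constant c = c(m) > 0 such that for all u, g ∈ ℝ^N: I_m(u,g) ≤ c · ‖u^m − g^m‖^{(1+m)/m}. -/
open scoped RealInnerProductSpace

set_option maxHeartbeats 1000000

noncomputable section

private lemma rpow_add'' {a : ℝ} (ha : 0 ≤ a) {y z w : ℝ} (hw : w ≠ 0) (h : y + z = w) :
    a ^ y * a ^ z = a ^ w := by
  subst h; exact (Real.rpow_add' ha hw).symm

/-- For every `m > 1` there is `c = c(m) > 0` such that for all `u, g ∈ ℝ^N`: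
`I_m(u,g) ≤ c·‖u^m − g^m‖^((1+m)/m)`. -/
theorem boundary_term_le_degenerate {N : ℕ} (hN : 1 ≤ N) (m : ℝ) (hm : 1 < m) :
    ∃ c : ℝ, 0 < c ∧ ∀ u g : EuclideanSpace ℝ (Fin N),
      Ifun m u g ≤ c * ‖vpow m u - vpow m g‖ ^ ((1 + m) / m) := by
  have hm0 : (0:ℝ) < m := lt_trans one_pos hm
  have hm1 : (0:ℝ) ≤ m - 1 := by linarith
  have hmne : m ≠ 0 := ne_of_gt hm0
  have hm1ne : m + 1 ≠ 0 := by positivity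
  refine ⟨2, two_pos, fun u g => ?_⟩
  by_cases hug : u = g
  · subst hug
    have h0 : Ifun m u u = 0 := by simp [Ifun]
    rw [h0]
    positivity
  set a := ‖u‖ with ha_def
  set b := ‖g‖ with hb_def
  have ha : 0 ≤ a := norm_nonneg u
  have hb : 0 ≤ b := norm_nonneg g
  set d := vpow m u - vpow m g with hd_def
  set r := ‖u - g‖ with hr_def
  have hr0 : 0 ≤ r := norm_nonneg _
  have hrpos : 0 < r := by
    rcases hr0.lt_or_eq with h | h
    · exact h
    · exact absurd (by rwa [hr_def, eq_comm, norm_eq_zero, sub_eq_zero] at h) hug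
  have hd0 : 0 ≤ ‖d‖ := norm_nonneg _
  -- power identities
  have pa1 : a ^ (m-1) * a = a ^ m := by
    have := rpow_add'' ha hmne (y := m - 1) (z := 1) (by ring)
    rwa [Real.rpow_one] at this
  have pa2 : a ^ m * a = a ^ (m+1) := by
    have := rpow_add'' ha hm1ne (y := m) (z := 1) (by ring)
    rwa [Real.rpow_one] at this
  have pb1 : b ^ (m-1) * b = b ^ m := by
    have := rpow_add'' hb hmne (y := m - 1) (z := 1) (by ring)
    rwa [Real.rpow_one] at this
  have pb2 : b ^ m * b = b ^ (m+1) := by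
    have := rpow_add'' hb hm1ne (y := m) (z := 1) (by ring)
    rwa [Real.rpow_one] at this
  have paa : a ^ (m-1) * (a*a) = a ^ (m+1) := by rw [← mul_assoc, pa1, pa2]
  have pbb : b ^ (m-1) * (b*b) = b ^ (m+1) := by rw [← mul_assoc, pb1, pb2]
  -- inner product expansions
  have hinner_d : ⟪d, u - g⟫ =
      a^(m-1) * (a*a) - (a^(m-1) + b^(m-1)) * ⟪u, g⟫ + b^(m-1) * (b*b) := by
    rw [hd_def]
    simp only [vpow, inner_sub_left, inner_sub_right, real_inner_smul_left,
      real_inner_self_eq_norm_mul_norm, real_inner_comm g u]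
    ring
  have hIfun : Ifun m u g =
      1/(m+1) * (a^(m+1) - b^(m+1)) - (b^(m-1) * ⟪u, g⟫ - b^(m-1) * (b*b)) := by
    simp only [Ifun, vpow, inner_sub_right, real_inner_smul_left,
      real_inner_self_eq_norm_mul_norm, real_inner_comm g u]
    try ring
  have hrsq : r * r = a*a - 2*⟪u, g⟫ + b*b := by
    have h := norm_sub_sq_real u g
    simpa [pow_two] using h
  -- Young's inequality
  have young : a^m * b ≤ m/(m+1) * a^(m+1) + 1/(m+1) * b^(m+1) := by
    have hpq : ((m+1)/m).HolderConjugate (m+1) := by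
      rw [Real.holderConjugate_iff]
      constructor
      · rw [lt_div_iff₀ hm0]; linarith
      · field_simp
    have h := Real.young_inequality_of_nonneg (Real.rpow_nonneg ha m) hb hpq
    have e1 : (a^m)^((m+1)/m) = a^(m+1) := by
      rw [← Real.rpow_mul ha]
      congr 1
      field_simp
    rw [e1] at h
    have e2 : a^(m+1)/((m+1)/m) = m/(m+1) * a^(m+1) := by
      field_simp
    have e3 : b^(m+1)/(m+1) = 1/(m+1) * b^(m+1) := by ring
    rw [e2, e3] at h
    exact h
  -- Step A : Ifun ≤ ⟪d, u - g⟫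
  have hm1pos : (0:ℝ) < m + 1 := by linarith
  have young' : (m+1) * (a^m * b) ≤ m * a^(m+1) + b^(m+1) := by
    have h2 := mul_le_mul_of_nonneg_left young hm1pos.le
    have e : (m+1) * (m/(m+1) * a^(m+1) + 1/(m+1) * b^(m+1))
        = m * a^(m+1) + b^(m+1) := by
      field_simp
    linarith [h2, e.ge, e.le]
  have h1 : a^(m-1) * ⟪u, g⟫ ≤ a^m * b := by
    calc a^(m-1) * ⟪u, g⟫ ≤ a^(m-1) * (a*b) := by
          apply mul_le_mul_of_nonneg_left _ (Real.rpow_nonneg ha _)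
          exact real_inner_le_norm u g
      _ = a^m * b := by rw [← pa1]; ring
  have h1' : (m+1) * (a^(m-1) * ⟪u, g⟫) ≤ (m+1) * (a^m * b) :=
    mul_le_mul_of_nonneg_left h1 hm1pos.le
  have hIleD : Ifun m u g ≤ ⟪d, u - g⟫ := by
    rw [hIfun, hinner_d, paa, pbb]
    have key : 1/(m+1) * (a^(m+1) - b^(m+1)) ≤ a^(m+1) - a^(m-1) * ⟪u, g⟫ := by
      rw [one_div_mul_eq_div, div_le_iff₀ hm1pos]
      nlinarith [young', h1']
    linarith [key]
  -- Step B : 2^(-m) * r^(m+1) ≤ ⟪d, u - g⟫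
  have hsign : 0 ≤ (a^(m-1) - b^(m-1)) * (a*a - b*b) := by
    rcases le_total a b with h | h
    · have h1 : a^(m-1) ≤ b^(m-1) := Real.rpow_le_rpow ha h hm1
      have h2 : a*a ≤ b*b := mul_le_mul h h ha hb
      nlinarith [h1, h2]
    · have h1 : b^(m-1) ≤ a^(m-1) := Real.rpow_le_rpow hb h hm1
      have h2 : b*b ≤ a*a := mul_le_mul h h hb ha
      exact mul_nonneg (by linarith) (by linarith)
  have hABr : (a^(m-1) + b^(m-1))/2 * (r*r) ≤ ⟪d, u - g⟫ := by
    rw [hinner_d, hrsq]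
    linarith [hsign]
  have h2sum : (a+b)^(m-1) ≤ 2^(m-1) * (a^(m-1) + b^(m-1)) := by
    have h2p : (0:ℝ) ≤ (2:ℝ)^(m-1) := Real.rpow_nonneg (by norm_num) _
    rcases le_total a b with h | h
    · calc (a+b)^(m-1) ≤ (2*b)^(m-1) := Real.rpow_le_rpow (by linarith) (by linarith) hm1
        _ = 2^(m-1) * b^(m-1) := Real.mul_rpow (by norm_num) hb
        _ ≤ 2^(m-1) * (a^(m-1) + b^(m-1)) := by
            nlinarith [Real.rpow_nonneg ha (m-1)]
    · calc (a+b)^(m-1) ≤ (2*a)^(m-1) := Real.rpow_le_rpow (by linarith) (by linarith) hm1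
        _ = 2^(m-1) * a^(m-1) := Real.mul_rpow (by norm_num) ha
        _ ≤ 2^(m-1) * (a^(m-1) + b^(m-1)) := by
            nlinarith [Real.rpow_nonneg hb (m-1)]
  have hrab : r^(m-1) ≤ (a+b)^(m-1) := Real.rpow_le_rpow hr0 (norm_sub_le u g) hm1
  have h4 : 2^(1-m) * r^(m-1) ≤ a^(m-1) + b^(m-1) := by
    have hpos : (0:ℝ) < (2:ℝ)^(1-m) := Real.rpow_pos_of_pos two_pos _
    have hmul : (2:ℝ)^(1-m) * (2:ℝ)^(m-1) = 1 := by
      rw [← Real.rpow_add two_pos]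
      norm_num
    calc 2^(1-m) * r^(m-1) ≤ 2^(1-m) * (2^(m-1) * (a^(m-1) + b^(m-1))) := by
          apply mul_le_mul_of_nonneg_left _ hpos.le
          exact hrab.trans h2sum
      _ = a^(m-1) + b^(m-1) := by rw [← mul_assoc, hmul, one_mul]
  have hrr2 : r^(m-1) * (r*r) = r^(m+1) := by
    have e2 : r ^ ((2:ℕ):ℝ) = r*r := by
      rw [Real.rpow_natCast]; ring
    have e := rpow_add'' hr0 hm1ne (y := m-1) (z := ((2:ℕ):ℝ)) (by push_cast; ring)
    rw [e2] at e; exact e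
  have hDlow : 2^(-m) * r^(m+1) ≤ ⟪d, u - g⟫ := by
    have e : (2:ℝ)^(-m) = 2^(1-m)/2 := by
      rw [show (1-m : ℝ) = 1 + (-m) by ring, Real.rpow_add two_pos, Real.rpow_one]
      ring
    have step : 2^(-m) * r^(m+1) ≤ (a^(m-1) + b^(m-1))/2 * (r*r) := by
      rw [e, ← hrr2]
      calc 2^(1-m)/2 * (r^(m-1) * (r*r)) = 2^(1-m) * r^(m-1)/2 * (r*r) := by ring
        _ ≤ (a^(m-1) + b^(m-1))/2 * (r*r) :=
            mul_le_mul_of_nonneg_right (by linarith) (mul_self_nonneg r)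
    exact step.trans hABr
  -- Cauchy–Schwarz
  have hCS : ⟪d, u - g⟫ ≤ ‖d‖ * r := real_inner_le_norm d (u - g)
  -- deduce r ≤ 2 * ‖d‖^(1/m)
  have h2m : (0:ℝ) < (2:ℝ)^m := Real.rpow_pos_of_pos two_pos m
  have hrm : r^m ≤ 2^m * ‖d‖ := by
    have e : r^(m+1) = r^m * r := by
      have := rpow_add'' hr0 hm1ne (y := m) (z := 1) (by ring)
      rw [Real.rpow_one] at this; exact this.symm
    have h := hDlow.trans hCS
    rw [e, ← mul_assoc] at h
    have h' : 2^(-m) * r^m ≤ ‖d‖ := le_of_mul_le_mul_right h hrpos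
    rw [Real.rpow_neg (by norm_num : (0:ℝ) ≤ 2)] at h'
    exact (inv_mul_le_iff₀ h2m).mp h'
  have hrr : r ≤ 2 * ‖d‖^(1/m) := by
    have s1 : (r^m)^(1/m) ≤ (2^m * ‖d‖)^(1/m) :=
      Real.rpow_le_rpow (Real.rpow_nonneg hr0 m) hrm (by positivity)
    have s2 : (r^m)^(1/m) = r := by
      rw [← Real.rpow_mul hr0, show m*(1/m) = 1 by field_simp, Real.rpow_one]
    have s3 : (2^m * ‖d‖)^(1/m) = 2 * ‖d‖^(1/m) := by
      rw [Real.mul_rpow h2m.le hd0, ← Real.rpow_mul (by norm_num : (0:ℝ) ≤ 2),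
        show m*(1/m) = 1 by field_simp, Real.rpow_one]
    rw [s2, s3] at s1
    exact s1
  -- combine
  have e4 : ‖d‖ * ‖d‖^(1/m) = ‖d‖^((1+m)/m) := by
    have hne : (1+m)/m ≠ 0 := div_ne_zero (by linarith) hmne
    have := rpow_add'' hd0 hne (y := 1) (z := 1/m) (by field_simp; ring)
    rwa [Real.rpow_one] at this
  calc Ifun m u g ≤ ‖d‖ * r := hIleD.trans hCS
    _ ≤ ‖d‖ * (2 * ‖d‖^(1/m)) := mul_le_mul_of_nonneg_left hrr hd0
    _ = 2 * (‖d‖ * ‖d‖^(1/m)) := by ring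
    _ = 2 * ‖d‖^((1+m)/m) := by rw [e4]

end
end

section
/- For every m > 0 there exists a constant c = c(m) > 0 such that for all u, g ∈ ℝ^N: I_m(u,g) ≤ c · (‖u‖ + ‖g‖)^{m−1} · ‖u − g‖² and (‖u‖ + ‖g‖)^{m−1} · ‖u − g‖² ≤ c · ‖u^m − g^m‖ · ‖u − g‖, with the convention that 0 raised to a negative real power equals 0. -/
open scoped RealInnerProductSpace

noncomputable section

namespace BoundaryAux

open Real Set

/-- `s^m = s^(m-1) * s` for `s ≥ 0`, `m ≠ 0` (works at `s = 0`). -/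
lemma rpow_split {s m : ℝ} (hs : 0 ≤ s) (hm : m ≠ 0) : s ^ m = s ^ (m - 1) * s := by
  have h : s ^ ((m - 1) + 1) = s ^ (m - 1) * s :=
    Real.rpow_add_one' hs (by rw [show m - 1 + 1 = m by ring]; exact hm)
  rwa [show m - 1 + 1 = m by ring] at h

/-- `(s/k)^e = s^e * k^(-e)` for `s ≥ 0`, `k > 0`. -/
lemma div_rpow_eq {s k e : ℝ} (hs : 0 ≤ s) (hk : 0 < k) :
    (s / k) ^ e = s ^ e * k ^ (-e) := by
  rw [Real.div_rpow hs hk.le, Real.rpow_neg hk.le, div_eq_mul_inv]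

/-- Mean value theorem for `x ↦ x^m` on `[b,a] ⊆ [0,∞)`. -/
lemma mvt_rpow {m a b : ℝ} (hm : 0 < m) (hb : 0 ≤ b) (hba : b < a) :
    ∃ ξ, b < ξ ∧ ξ < a ∧ a ^ m - b ^ m = m * ξ ^ (m - 1) * (a - b) := by
  have hcont : ContinuousOn (fun x : ℝ => x ^ m) (Icc b a) := fun x _ =>
    (Real.continuousAt_rpow_const x m (Or.inr hm.le)).continuousWithinAt
  have hderiv : ∀ x ∈ Ioo b a, HasDerivAt (fun x : ℝ => x ^ m) (m * x ^ (m - 1)) x := by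
    intro x hx
    have hx0 : x ≠ 0 := (lt_of_le_of_lt hb hx.1).ne'
    simpa using Real.hasDerivAt_rpow_const (p := m) (Or.inl hx0)
  obtain ⟨ξ, hξ, h⟩ := exists_hasDerivAt_eq_slope (fun x : ℝ => x ^ m)
    (fun x => m * x ^ (m - 1)) hba hcont hderiv
  refine ⟨ξ, hξ.1, hξ.2, ?_⟩
  have hab : a - b ≠ 0 := sub_ne_zero.mpr hba.ne'
  rw [eq_div_iff hab] at h
  linarith [h]

/-- Upper bound: `a^m - b^m ≤ Cu(m) (a+b)^(m-1) (a-b)` for `0 ≤ b ≤ a`. -/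
lemma upper_scalar {m a b : ℝ} (hm : 0 < m) (hb : 0 ≤ b) (hba : b ≤ a) :
    a ^ m - b ^ m ≤
      (m + m * 3 ^ (1 - m) + 2 * 2 ^ (1 - m)) * ((a + b) ^ (m - 1) * (a - b)) := by
  have ha : 0 ≤ a := hb.trans hba
  have h3 : (0:ℝ) < 3 ^ (1 - m) := Real.rpow_pos_of_pos (by norm_num) _
  have h2 : (0:ℝ) < 2 ^ (1 - m) := Real.rpow_pos_of_pos (by norm_num) _
  have hQ : 0 ≤ (a + b) ^ (m - 1) := Real.rpow_nonneg (by linarith) _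
  rcases eq_or_lt_of_le hba with rfl | hlt
  · simp
  have ha' : 0 < a := lt_of_le_of_lt hb hlt
  have hQab : 0 ≤ (a + b) ^ (m - 1) * (a - b) := mul_nonneg hQ (by linarith)
  -- It suffices to prove the bound with one of the three summands.
  rcases le_or_gt 1 m with hm1 | hm1
  · -- convex case: use MVT and `ξ ≤ a + b`
    obtain ⟨ξ, hbξ, hξa, hmvt⟩ := mvt_rpow hm hb hlt
    have hξ0 : 0 ≤ ξ := hb.trans hbξ.le
    have hbound : ξ ^ (m - 1) ≤ (a + b) ^ (m - 1) :=
      Real.rpow_le_rpow hξ0 (by linarith) (by linarith)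
    have : a ^ m - b ^ m ≤ m * ((a + b) ^ (m - 1) * (a - b)) := by
      rw [hmvt]
      have := mul_le_mul_of_nonneg_right
        (mul_le_mul_of_nonneg_left hbound hm.le) (show (0:ℝ) ≤ a - b by linarith)
      linarith [this]
    nlinarith [mul_nonneg (mul_nonneg hm.le h3.le) hQab, mul_nonneg (mul_nonneg (by norm_num : (0:ℝ) ≤ 2) h2.le) hQab]
  · -- concave case
    rcases le_or_gt a (2 * b) with hab2 | hab2
    · -- b is comparable to a: use MVT and `ξ ≥ b ≥ (a+b)/3`
      have hb' : 0 < b := by nlinarith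
      obtain ⟨ξ, hbξ, hξa, hmvt⟩ := mvt_rpow hm hb hlt
      have hξb : ξ ^ (m - 1) ≤ b ^ (m - 1) :=
        Real.rpow_le_rpow_of_nonpos hb' hbξ.le (by linarith)
      have hb3 : (a + b) / 3 ≤ b := by linarith
      have hb3' : (0:ℝ) < (a + b) / 3 := by linarith
      have hdb : b ^ (m - 1) ≤ ((a + b) / 3) ^ (m - 1) :=
        Real.rpow_le_rpow_of_nonpos hb3' hb3 (by linarith)
      have heq : ((a + b) / 3) ^ (m - 1) = (a + b) ^ (m - 1) * 3 ^ (1 - m) := by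
        rw [div_rpow_eq (by linarith) (by norm_num)]
        norm_num [show -(m - 1) = 1 - m by ring]
      have hkey : a ^ m - b ^ m ≤ m * 3 ^ (1 - m) * ((a + b) ^ (m - 1) * (a - b)) := by
        rw [hmvt]
        have hξQ : ξ ^ (m - 1) ≤ (a + b) ^ (m - 1) * 3 ^ (1 - m) := by
          rw [← heq]; exact hξb.trans hdb
        nlinarith [mul_le_mul_of_nonneg_right hξQ (show (0:ℝ) ≤ a - b by linarith)]
      nlinarith [mul_nonneg hm.le hQab, mul_nonneg (mul_nonneg (by norm_num : (0:ℝ) ≤ 2) h2.le) hQab]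
    · -- a dominates: `a^m - b^m ≤ a^m = a^(m-1)·a ≤ 2^(1-m) Q · 2(a-b)`
      have hbm : 0 ≤ b ^ m := Real.rpow_nonneg hb _
      have h1 : a ^ m = a ^ (m - 1) * a := rpow_split ha hm.ne'
      have h2a : (a + b) / 2 ≤ a := by linarith
      have h2a' : (0:ℝ) < (a + b) / 2 := by linarith
      have hda : a ^ (m - 1) ≤ ((a + b) / 2) ^ (m - 1) :=
        Real.rpow_le_rpow_of_nonpos h2a' h2a (by linarith)
      have heq : ((a + b) / 2) ^ (m - 1) = (a + b) ^ (m - 1) * 2 ^ (1 - m) := by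
        rw [div_rpow_eq (by linarith) (by norm_num)]
        norm_num [show -(m - 1) = 1 - m by ring]
      have hkey : a ^ m - b ^ m ≤ 2 * 2 ^ (1 - m) * ((a + b) ^ (m - 1) * (a - b)) := by
        rw [h1]
        have haQ : a ^ (m - 1) ≤ (a + b) ^ (m - 1) * 2 ^ (1 - m) := heq ▸ hda
        have ha2 : a ≤ 2 * (a - b) := by linarith
        nlinarith [mul_le_mul_of_nonneg_right haQ ha'.le,
          mul_nonneg (mul_nonneg hQ h2.le) (show (0:ℝ) ≤ 2 * (a - b) - a by linarith)]
      nlinarith [mul_nonneg hm.le hQab, mul_nonneg (mul_nonneg hm.le h3.le) hQab]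

/-- Lower bound: `min m 2^(1-m) · (a+b)^(m-1)(a-b) ≤ a^m - b^m` for `0 ≤ b ≤ a`. -/
lemma lower_scalar {m a b : ℝ} (hm : 0 < m) (hb : 0 ≤ b) (hba : b ≤ a) :
    min m (2 ^ (1 - m)) * ((a + b) ^ (m - 1) * (a - b)) ≤ a ^ m - b ^ m := by
  have ha : 0 ≤ a := hb.trans hba
  have h2 : (0:ℝ) < 2 ^ (1 - m) := Real.rpow_pos_of_pos (by norm_num) _
  have hQ : 0 ≤ (a + b) ^ (m - 1) := Real.rpow_nonneg (by linarith) _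
  rcases eq_or_lt_of_le hba with rfl | hlt
  · simp
  have ha' : 0 < a := lt_of_le_of_lt hb hlt
  have hQab : 0 ≤ (a + b) ^ (m - 1) * (a - b) := mul_nonneg hQ (by linarith)
  rcases le_or_gt 1 m with hm1 | hm1
  · -- convex case, algebraic: `a^m - b^m ≥ a^(m-1)(a-b) ≥ 2^(1-m) Q (a-b)`
    have h1 : a ^ m = a ^ (m - 1) * a := rpow_split ha hm.ne'
    have h1b : b ^ m = b ^ (m - 1) * b := rpow_split hb hm.ne'
    have hmono : b ^ (m - 1) ≤ a ^ (m - 1) := Real.rpow_le_rpow hb hba (by linarith)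
    have h2a : (a + b) / 2 ≤ a := by linarith
    have hda : ((a + b) / 2) ^ (m - 1) ≤ a ^ (m - 1) :=
      Real.rpow_le_rpow (by linarith) h2a (by linarith)
    have heq : ((a + b) / 2) ^ (m - 1) = (a + b) ^ (m - 1) * 2 ^ (1 - m) := by
      rw [div_rpow_eq (by linarith) (by norm_num)]
      norm_num [show -(m - 1) = 1 - m by ring]
    have hkey : 2 ^ (1 - m) * ((a + b) ^ (m - 1) * (a - b)) ≤ a ^ m - b ^ m := by
      rw [h1, h1b]
      have hQa : (a + b) ^ (m - 1) * 2 ^ (1 - m) ≤ a ^ (m - 1) := heq ▸ hda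
      nlinarith [mul_le_mul_of_nonneg_right hQa (show (0:ℝ) ≤ a - b by linarith),
        mul_le_mul_of_nonneg_right hmono hb]
    have hmin : min m (2 ^ (1 - m)) ≤ 2 ^ (1 - m) := min_le_right _ _
    nlinarith [mul_le_mul_of_nonneg_right hmin hQab]
  · -- concave case: MVT, `ξ^(m-1) ≥ a^(m-1) ≥ (a+b)^(m-1)`
    obtain ⟨ξ, hbξ, hξa, hmvt⟩ := mvt_rpow hm hb hlt
    have hξ0 : 0 < ξ := lt_of_le_of_lt hb hbξ
    have h1 : a ^ (m - 1) ≤ ξ ^ (m - 1) :=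
      Real.rpow_le_rpow_of_nonpos hξ0 hξa.le (by linarith)
    have h2' : (a + b) ^ (m - 1) ≤ a ^ (m - 1) :=
      Real.rpow_le_rpow_of_nonpos ha' (by linarith) (by linarith)
    have hkey : m * ((a + b) ^ (m - 1) * (a - b)) ≤ a ^ m - b ^ m := by
      rw [hmvt]
      nlinarith [mul_le_mul_of_nonneg_right (h2'.trans h1) (show (0:ℝ) ≤ a - b by linarith)]
    have hmin : min m (2 ^ (1 - m)) ≤ m := min_le_left _ _
    nlinarith [mul_le_mul_of_nonneg_right hmin hQab]

/-- Bregman upper bound: `a^(m+1) - b^(m+1) ≤ (m+1) a^m (a-b)` for `a,b ≥ 0`. -/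
lemma bregman_scalar {m a b : ℝ} (hm : 0 < m) (ha : 0 ≤ a) (hb : 0 ≤ b) :
    a ^ (m + 1) - b ^ (m + 1) ≤ (m + 1) * (a ^ m * (a - b)) := by
  have hm1 : (0:ℝ) < m + 1 := by linarith
  rcases lt_trichotomy a b with hab | rfl | hab
  · obtain ⟨ξ, haξ, hξb, hmvt⟩ := mvt_rpow hm1 ha hab
    have h1 : a ^ (m + 1 - 1) ≤ ξ ^ (m + 1 - 1) :=
      Real.rpow_le_rpow ha haξ.le (by linarith)
    rw [show m + 1 - 1 = m by ring] at h1 hmvt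
    nlinarith [mul_le_mul_of_nonneg_right h1 (show (0:ℝ) ≤ b - a by linarith)]
  · simp
  · obtain ⟨ξ, hbξ, hξa, hmvt⟩ := mvt_rpow hm1 hb hab
    have h1 : ξ ^ (m + 1 - 1) ≤ a ^ (m + 1 - 1) :=
      Real.rpow_le_rpow (hb.trans hbξ.le) hξa.le (by linarith)
    rw [show m + 1 - 1 = m by ring] at h1 hmvt
    nlinarith [mul_le_mul_of_nonneg_right h1 (show (0:ℝ) ≤ a - b by linarith)]

/-- Symmetric form of the upper bound. -/
lemma upper_sym {m a b : ℝ} (hm : 0 < m) (ha : 0 ≤ a) (hb : 0 ≤ b) :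
    (a ^ m - b ^ m) * (a - b) ≤
      (m + m * 3 ^ (1 - m) + 2 * 2 ^ (1 - m)) * ((a + b) ^ (m - 1) * ((a - b) * (a - b))) := by
  rcases le_total b a with h | h
  · have := mul_le_mul_of_nonneg_right (upper_scalar hm hb h) (show (0:ℝ) ≤ a - b by linarith)
    linarith [this]
  · have := mul_le_mul_of_nonneg_right (upper_scalar hm ha h) (show (0:ℝ) ≤ b - a by linarith)
    rw [add_comm b a] at this
    nlinarith [this]

/-- Symmetric form of the lower bound. -/
lemma lower_sym {m a b : ℝ} (hm : 0 < m) (ha : 0 ≤ a) (hb : 0 ≤ b) :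
    min m (2 ^ (1 - m)) * ((a + b) ^ (m - 1) * ((a - b) * (a - b))) ≤
      (a ^ m - b ^ m) * (a - b) := by
  rcases le_total b a with h | h
  · have := mul_le_mul_of_nonneg_right (lower_scalar hm hb h) (show (0:ℝ) ≤ a - b by linarith)
    nlinarith [this]
  · have := mul_le_mul_of_nonneg_right (lower_scalar hm ha h) (show (0:ℝ) ≤ b - a by linarith)
    rw [add_comm b a] at this
    nlinarith [this]

/-- auxiliary, ordered version. -/
lemma pq_lower_aux {m a b : ℝ} (hm : 0 < m) (hb : 0 ≤ b) (hba : b ≤ a) (hs : 0 < a + b) :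
    min 1 (2 ^ (1 - m)) * (a + b) ^ (m - 1) ≤ a ^ (m - 1) + b ^ (m - 1) := by
  have h2 : (0:ℝ) < 2 ^ (1 - m) := Real.rpow_pos_of_pos (by norm_num) _
  have hQ : (0:ℝ) ≤ (a + b) ^ (m - 1) := Real.rpow_nonneg hs.le _
  have ha' : 0 < a := by linarith
  have hbQ : (0:ℝ) ≤ b ^ (m - 1) := Real.rpow_nonneg hb _
  rcases le_or_gt 1 m with hm1 | hm1
  · have h2a : (a + b) / 2 ≤ a := by linarith
    have hda : ((a + b) / 2) ^ (m - 1) ≤ a ^ (m - 1) :=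
      Real.rpow_le_rpow (by linarith) h2a (by linarith)
    have heq : ((a + b) / 2) ^ (m - 1) = (a + b) ^ (m - 1) * 2 ^ (1 - m) := by
      rw [div_rpow_eq hs.le (by norm_num)]
      norm_num [show -(m - 1) = 1 - m by ring]
    have hmin : min (1:ℝ) (2 ^ (1 - m)) ≤ 2 ^ (1 - m) := min_le_right _ _
    nlinarith [mul_le_mul_of_nonneg_right hmin hQ, heq ▸ hda]
  · have h1 : (a + b) ^ (m - 1) ≤ a ^ (m - 1) :=
      Real.rpow_le_rpow_of_nonpos ha' (by linarith) (by linarith)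
    have hmin : min (1:ℝ) (2 ^ (1 - m)) ≤ 1 := min_le_left _ _
    nlinarith [mul_le_mul_of_nonneg_right hmin hQ]

/-- `min 1 (2^(1-m)) (a+b)^(m-1) ≤ a^(m-1) + b^(m-1)` for `a+b > 0`. -/
lemma pq_lower {m a b : ℝ} (hm : 0 < m) (ha : 0 ≤ a) (hb : 0 ≤ b) (hs : 0 < a + b) :
    min 1 (2 ^ (1 - m)) * (a + b) ^ (m - 1) ≤ a ^ (m - 1) + b ^ (m - 1) := by
  rcases le_total b a with h | h
  · exact pq_lower_aux hm hb h hs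
  · have := pq_lower_aux hm ha h (by linarith)
    rw [add_comm b a] at this
    linarith

end BoundaryAux

open BoundaryAux Real

set_option maxHeartbeats 1600000

/-- For every `m > 0` there is `c = c(m) > 0` such that for all `u, g ∈ ℝ^N`:
`I_m(u,g) ≤ c·(‖u‖ + ‖g‖)^(m−1)·‖u − g‖²` and
`(‖u‖ + ‖g‖)^(m−1)·‖u − g‖² ≤ c·‖u^m − g^m‖·‖u − g‖`
(with the `Real.rpow` convention that `0` to a negative power is `0`). -/
theorem boundary_term_le {N : ℕ} (hN : 1 ≤ N) (m : ℝ) (hm : 0 < m) :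
    ∃ c : ℝ, 0 < c ∧ ∀ u g : EuclideanSpace ℝ (Fin N),
      Ifun m u g ≤ c * ((‖u‖ + ‖g‖) ^ (m - 1) * ‖u - g‖ ^ 2) ∧
      (‖u‖ + ‖g‖) ^ (m - 1) * ‖u - g‖ ^ 2 ≤ c * (‖vpow m u - vpow m g‖ * ‖u - g‖) := by
  have h2 : (0:ℝ) < 2 ^ (1 - m) := Real.rpow_pos_of_pos (by norm_num) _
  have h3 : (0:ℝ) < 3 ^ (1 - m) := Real.rpow_pos_of_pos (by norm_num) _
  obtain ⟨Cu, hCu_def⟩ : ∃ x : ℝ, x = m + m * 3 ^ (1 - m) + 2 * 2 ^ (1 - m) := ⟨_, rfl⟩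
  obtain ⟨cl, hcl_def⟩ : ∃ x : ℝ, x = min m (2 ^ (1 - m)) := ⟨_, rfl⟩
  obtain ⟨μ, hμ_def⟩ : ∃ x : ℝ, x = min 1 (2 ^ (1 - m)) := ⟨_, rfl⟩
  have hCu : 0 < Cu := by rw [hCu_def]; positivity
  have hcl : 0 < cl := by rw [hcl_def]; exact lt_min hm h2
  have hμ : 0 < μ := by rw [hμ_def]; exact lt_min one_pos h2
  obtain ⟨c2, hc2_def⟩ : ∃ x : ℝ, x = 2 / μ + 1 / cl := ⟨_, rfl⟩
  have hc2 : 0 < c2 := by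
    rw [hc2_def]; exact add_pos (div_pos two_pos hμ) (div_pos one_pos hcl)
  obtain ⟨c, hc_def⟩ : ∃ x : ℝ, x = Cu + 2 + c2 := ⟨_, rfl⟩
  have hc : 0 < c := by rw [hc_def]; linarith
  refine ⟨c, hc, fun u g => ?_⟩
  by_cases hug : u = g
  · subst hug
    constructor
    · simp [Ifun]
    · simp
  -- geometric identities, in raw form
  have hnorm : ‖u - g‖ ^ 2 = ‖u‖ ^ 2 - 2 * ⟪u, g⟫ + ‖g‖ ^ 2 := norm_sub_sq_real u g
  have hI : Ifun m u g = 1 / (m + 1) * (‖u‖ ^ (m + 1) - ‖g‖ ^ (m + 1))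
      - ‖g‖ ^ (m - 1) * ⟪u, g⟫ + ‖g‖ ^ (m - 1) * ‖g‖ ^ 2 := by
    simp only [Ifun, vpow, inner_sub_right, real_inner_smul_left, real_inner_comm g u,
      real_inner_self_eq_norm_sq]
    ring
  have hinner : ⟪vpow m u - vpow m g, u - g⟫ =
      ‖u‖ ^ (m - 1) * ‖u‖ ^ 2 + ‖g‖ ^ (m - 1) * ‖g‖ ^ 2
        - (‖u‖ ^ (m - 1) + ‖g‖ ^ (m - 1)) * ⟪u, g⟫ := by
    simp only [vpow, inner_sub_left, inner_sub_right, real_inner_smul_left,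
      real_inner_comm g u, real_inner_self_eq_norm_sq]
    ring
  have htle : |⟪u, g⟫| ≤ ‖u‖ * ‖g‖ := abs_real_inner_le_norm u g
  have hs0 : u ≠ 0 ∨ g ≠ 0 := by
    by_contra h
    push_neg at h
    exact hug (h.1.trans h.2.symm)
  -- abstract the scalars
  obtain ⟨a, ha_def⟩ : ∃ x : ℝ, x = ‖u‖ := ⟨_, rfl⟩
  obtain ⟨b, hb_def⟩ : ∃ x : ℝ, x = ‖g‖ := ⟨_, rfl⟩
  obtain ⟨t, ht_def⟩ : ∃ x : ℝ, x = ⟪u, g⟫ := ⟨_, rfl⟩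
  rw [← ha_def, ← hb_def, ← ht_def] at hnorm hI hinner htle
  rw [← ha_def, ← hb_def]
  have ha : 0 ≤ a := by rw [ha_def]; exact norm_nonneg _
  have hb : 0 ≤ b := by rw [hb_def]; exact norm_nonneg _
  have hs : 0 < a + b := by
    rcases hs0 with h | h
    · have : 0 < a := by rw [ha_def]; exact norm_pos_iff.mpr h
      linarith
    · have : 0 < b := by rw [hb_def]; exact norm_pos_iff.mpr h
      linarith
  have ht1 : t ≤ a * b := le_of_abs_le htle
  have ht2 : -(a * b) ≤ t := neg_le_of_abs_le htle
  have hQ0 : (0:ℝ) ≤ (a + b) ^ (m - 1) := Real.rpow_nonneg hs.le _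
  have hPa0 : (0:ℝ) ≤ a ^ (m - 1) := Real.rpow_nonneg ha _
  have hPb0 : (0:ℝ) ≤ b ^ (m - 1) := Real.rpow_nonneg hb _
  have hA0 : (0:ℝ) ≤ a ^ (m + 1) := Real.rpow_nonneg ha _
  have hB0 : (0:ℝ) ≤ b ^ (m + 1) := Real.rpow_nonneg hb _
  have hm1 : (0:ℝ) < m + 1 := by linarith
  -- splitting identities
  have ham : a ^ m = a ^ (m - 1) * a := rpow_split ha hm.ne'
  have hbm : b ^ m = b ^ (m - 1) * b := rpow_split hb hm.ne'
  have hA1 : a ^ (m + 1) = a ^ m * a := by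
    have := rpow_split (s := a) (m := m + 1) ha hm1.ne'
    rwa [show m + 1 - 1 = m by ring] at this
  have hB1 : b ^ (m + 1) = b ^ m * b := by
    have := rpow_split (s := b) (m := m + 1) hb hm1.ne'
    rwa [show m + 1 - 1 = m by ring] at this
  have hAA : a ^ (m + 1) = a ^ (m - 1) * a * a := by rw [hA1, ham]
  have hBB : b ^ (m + 1) = b ^ (m - 1) * b * b := by rw [hB1, hbm]
  have hS : (a + b) ^ (m - 1) * ((a + b) * (a + b)) = (a + b) ^ (m + 1) := by
    have h1 : (a + b) ^ m = (a + b) ^ (m - 1) * (a + b) := rpow_split hs.le hm.ne'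
    have h2 : (a + b) ^ (m + 1) = (a + b) ^ m * (a + b) := by
      have := rpow_split (s := a + b) (m := m + 1) hs.le hm1.ne'
      rwa [show m + 1 - 1 = m by ring] at this
    rw [h2, h1]; ring
  -- scalar endpoint inequalities
  have hCuc : Cu ≤ c := by rw [hc_def]; linarith
  have h2c : (2:ℝ) ≤ c := by rw [hc_def]; linarith
  have hc2c : c2 ≤ c := by rw [hc_def]; linarith
  constructor
  · -- first inequality
    rw [hI, hnorm]
    have hsq0 : (0:ℝ) ≤ (a + b) ^ (m - 1) * ((a - b) * (a - b)) :=
      mul_nonneg hQ0 (mul_self_nonneg _)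
    have hS0 : (0:ℝ) ≤ (a + b) ^ (m - 1) * ((a + b) * (a + b)) :=
      mul_nonneg hQ0 (by positivity)
    have hE1 : 1 / (m + 1) * (a ^ (m + 1) - b ^ (m + 1)) - b ^ (m - 1) * b * (a - b)
        ≤ c * ((a + b) ^ (m - 1) * ((a - b) * (a - b))) := by
      have hbreg : a ^ (m + 1) - b ^ (m + 1) ≤ (m + 1) * (a ^ m * (a - b)) :=
        bregman_scalar hm ha hb
      have h1 : 1 / (m + 1) * (a ^ (m + 1) - b ^ (m + 1)) ≤ a ^ m * (a - b) := by
        calc 1 / (m + 1) * (a ^ (m + 1) - b ^ (m + 1))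
            ≤ 1 / (m + 1) * ((m + 1) * (a ^ m * (a - b))) :=
              mul_le_mul_of_nonneg_left hbreg (by positivity)
          _ = a ^ m * (a - b) := by field_simp
      have hup : (a ^ m - b ^ m) * (a - b) ≤
          Cu * ((a + b) ^ (m - 1) * ((a - b) * (a - b))) := by
        rw [hCu_def]; exact upper_sym hm ha hb
      rw [ham, hbm] at hup
      rw [ham] at h1
      have hCu' := mul_le_mul_of_nonneg_right hCuc hsq0
      linarith [h1, hup, hCu']
    have hE2 : 1 / (m + 1) * (a ^ (m + 1) - b ^ (m + 1)) + b ^ (m - 1) * b * (a + b)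
        ≤ c * ((a + b) ^ (m - 1) * ((a + b) * (a + b))) := by
      have hfrac : 1 / (m + 1) ≤ 1 := by
        rw [div_le_one hm1]; linarith
      have hAS : a ^ (m + 1) ≤ (a + b) ^ (m + 1) :=
        Real.rpow_le_rpow ha (by linarith) (by linarith)
      have h1 : 1 / (m + 1) * (a ^ (m + 1) - b ^ (m + 1)) ≤ (a + b) ^ (m + 1) := by
        have e1 : 1 / (m + 1) * (a ^ (m + 1) - b ^ (m + 1)) ≤ 1 / (m + 1) * a ^ (m + 1) :=
          mul_le_mul_of_nonneg_left (by linarith) (by positivity)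
        have e2 : 1 / (m + 1) * a ^ (m + 1) ≤ 1 * a ^ (m + 1) :=
          mul_le_mul_of_nonneg_right hfrac hA0
        linarith [hAS]
      have hbmS : b ^ m ≤ (a + b) ^ m := Real.rpow_le_rpow hb (by linarith) hm.le
      have h2' : b ^ (m - 1) * b * (a + b) ≤ (a + b) ^ (m + 1) := by
        have := mul_le_mul_of_nonneg_right hbmS hs.le
        have hs2 : (a + b) ^ m * (a + b) = (a + b) ^ (m + 1) := by
          rw [← hS, rpow_split hs.le hm.ne']; ring
        rw [← hbm]; linarith
      have h2S := mul_le_mul_of_nonneg_right h2c hS0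
      rw [← hS] at h1 h2'
      linarith [h1, h2', h2S]
    rcases le_total (b ^ (m - 1)) (2 * c * ((a + b) ^ (m - 1))) with hsl | hsl
    · have hprod : (0:ℝ) ≤ (a * b - t) * (2 * c * ((a + b) ^ (m - 1)) - b ^ (m - 1)) :=
        mul_nonneg (by linarith) (by linarith)
      linarith [hE1, hprod]
    · have hprod : (0:ℝ) ≤ (a * b + t) * (b ^ (m - 1) - 2 * c * ((a + b) ^ (m - 1))) :=
        mul_nonneg (by linarith) (by linarith)
      linarith [hE2, hprod]
  · -- second inequality
    have step1 : (a + b) ^ (m - 1) * (a ^ 2 - 2 * t + b ^ 2) ≤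
        c2 * ⟪vpow m u - vpow m g, u - g⟫ := by
      rw [hinner]
      have hW : cl * ((a + b) ^ (m - 1) * ((a - b) * (a - b))) ≤
          (a ^ m - b ^ m) * (a - b) := by
        rw [hcl_def]; exact lower_sym hm ha hb
      rw [ham, hbm] at hW
      have hL0 : (0:ℝ) ≤ (a + b) ^ (m - 1) * ((a - b) * (a - b)) :=
        mul_nonneg hQ0 (mul_self_nonneg _)
      have h1cl : (1:ℝ) ≤ c2 * cl := by
        rw [hc2_def]
        have h0 : (1 / cl) * cl = 1 := by field_simp
        have h2μ : (0:ℝ) ≤ 2 / μ * cl := by positivity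
        linarith [h0, h2μ]
      have hW2 : (a + b) ^ (m - 1) * ((a - b) * (a - b)) ≤
          c2 * ((a ^ (m - 1) * a - b ^ (m - 1) * b) * (a - b)) := by
        have hx := mul_le_mul_of_nonneg_left hW hc2.le
        have hy := mul_le_mul_of_nonneg_right h1cl hL0
        linarith [hx, hy]
      have hpq : μ * (a + b) ^ (m - 1) ≤ a ^ (m - 1) + b ^ (m - 1) := by
        rw [hμ_def]; exact pq_lower hm ha hb hs
      have hslope : 2 * (a + b) ^ (m - 1) ≤ c2 * (a ^ (m - 1) + b ^ (m - 1)) := by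
        have h1 : 2 * (a + b) ^ (m - 1) = (2 / μ) * (μ * (a + b) ^ (m - 1)) := by
          field_simp
        have h2' : (2 / μ) * (μ * (a + b) ^ (m - 1)) ≤
            (2 / μ) * (a ^ (m - 1) + b ^ (m - 1)) :=
          mul_le_mul_of_nonneg_left hpq (by positivity)
        have h3' : (2 / μ) * (a ^ (m - 1) + b ^ (m - 1)) ≤
            c2 * (a ^ (m - 1) + b ^ (m - 1)) := by
          apply mul_le_mul_of_nonneg_right _ (by linarith)
          rw [hc2_def]
          have : (0:ℝ) < 1 / cl := by positivity
          linarith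
        linarith
      have hprod2 : (0:ℝ) ≤ (a * b - t) *
          (c2 * (a ^ (m - 1) + b ^ (m - 1)) - 2 * (a + b) ^ (m - 1)) :=
        mul_nonneg (by linarith) (by linarith)
      linarith [hW2, hprod2]
    have step2 : c2 * ⟪vpow m u - vpow m g, u - g⟫ ≤
        c2 * (‖vpow m u - vpow m g‖ * ‖u - g‖) :=
      mul_le_mul_of_nonneg_left (real_inner_le_norm _ _) hc2.le
    have step3 : c2 * (‖vpow m u - vpow m g‖ * ‖u - g‖) ≤
        c * (‖vpow m u - vpow m g‖ * ‖u - g‖) :=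
      mul_le_mul_of_nonneg_right hc2c (by positivity)
    calc (a + b) ^ (m - 1) * ‖u - g‖ ^ 2
        = (a + b) ^ (m - 1) * (a ^ 2 - 2 * t + b ^ 2) := by rw [hnorm]
      _ ≤ c2 * ⟪vpow m u - vpow m g, u - g⟫ := step1
      _ ≤ c2 * (‖vpow m u - vpow m g‖ * ‖u - g‖) := step2
      _ ≤ c * (‖vpow m u - vpow m g‖ * ‖u - g‖) := step3

end
end

section
/- For every 0 < m < 1 there exists a constant c = c(m) > 0 such that for all u, w ∈ ℝ^N: ‖w − u‖^{m+1} ≤ c · (‖w‖ + ‖u‖)^{(1−m)(1+m)/2} · ‖w^{(m+1)/2} − u^{(m+1)/2}‖^{m+1}. -/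
noncomputable section

lemma rpow_pm1_mul {x p : ℝ} (hx : 0 ≤ x) (hp0 : p ≠ 0) (hp1 : p ≠ 1) :
    x ^ (p - 1) * x = x ^ p := by
  rcases hx.eq_or_lt with h | h
  · rw [← h, Real.zero_rpow (sub_ne_zero.mpr hp1), Real.zero_rpow hp0, zero_mul]
  · rw [Real.rpow_sub h, Real.rpow_one, div_mul_cancel₀ _ h.ne']

lemma rpow_two_mul' {x p : ℝ} (hx : 0 ≤ x) (hp0 : p ≠ 0) :
    x ^ (2 * p) = x ^ p * x ^ p := by
  rcases hx.eq_or_lt with h | h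
  · rw [← h, Real.zero_rpow (mul_ne_zero two_ne_zero hp0), Real.zero_rpow hp0, zero_mul]
  · rw [show (2:ℝ) * p = p + p by ring, Real.rpow_add h]

/-- Bernoulli consequence: for `0 ≤ b ≤ a` and `0 < p < 1`,
`p * (a - b) ≤ (a ^ p - b ^ p) * (a + b) ^ (1 - p)`. -/
lemma scalar_key {p a b : ℝ} (hp0 : 0 < p) (hp1 : p < 1) (hb : 0 ≤ b) (hab : b ≤ a) :
    p * (a - b) ≤ (a ^ p - b ^ p) * (a + b) ^ (1 - p) := by
  have ha : 0 ≤ a := hb.trans hab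
  rcases eq_or_lt_of_le ha with h | ha'
  · have hb0 : b = 0 := le_antisymm (hab.trans h.symm.le) hb
    simp [← h, hb0]
  -- a > 0
  have hbern : (b / a) ^ p ≤ 1 + p * (b / a - 1) := by
    have := rpow_one_add_le_one_add_mul_self (s := b / a - 1)
      (by nlinarith [div_nonneg hb ha'.le]) hp0.le hp1.le
    simpa using this
  have hbp : b ^ p = (b / a) ^ p * a ^ p := by
    rw [← Real.mul_rpow (div_nonneg hb ha'.le) ha'.le, div_mul_cancel₀ _ ha'.ne']
  have hap : 0 < a ^ p := Real.rpow_pos_of_pos ha' p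
  -- b^p ≤ a^p - p * a^(p-1) * (a - b)
  have key1 : p * a ^ (p - 1) * (a - b) ≤ a ^ p - b ^ p := by
    have h1 : b ^ p ≤ (1 + p * (b / a - 1)) * a ^ p := by
      rw [hbp]; exact mul_le_mul_of_nonneg_right hbern hap.le
    have h2 : a ^ (p - 1) * a = a ^ p := rpow_pm1_mul ha'.le hp0.ne' hp1.ne
    have h3 : a ^ (p - 1) = a ^ p / a := by
      field_simp [← h2]
      exact h2
    rw [h3]
    have : (1 + p * (b / a - 1)) * a ^ p = a ^ p + p * (a ^ p / a) * (b - a) := by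
      field_simp
    nlinarith [h1]
  have h4 : a ^ (1 - p) ≤ (a + b) ^ (1 - p) :=
    Real.rpow_le_rpow ha'.le (by linarith) (by linarith)
  have h5 : a ^ (p - 1) * a ^ (1 - p) = 1 := by
    rw [← Real.rpow_add ha', show p - 1 + (1 - p) = (0:ℝ) by ring, Real.rpow_zero]
  have h6 : 0 ≤ p * a ^ (p - 1) * (a - b) :=
    mul_nonneg (mul_nonneg hp0.le (Real.rpow_nonneg ha'.le _)) (by linarith)
  calc p * (a - b) = (p * a ^ (p - 1) * (a - b)) * a ^ (1 - p) := by
        rw [show p * a ^ (p-1) * (a-b) * a ^ (1-p) = p * (a-b) * (a ^ (p-1) * a ^ (1-p)) by ring,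
          h5, mul_one]
    _ ≤ (a ^ p - b ^ p) * (a + b) ^ (1 - p) := by
        apply mul_le_mul key1 h4 (Real.rpow_nonneg ha'.le _) (by linarith)

/-- Subadditivity of `x ^ p` for `0 ≤ p ≤ 1` on nonnegative reals. -/
lemma rpow_subadd {p a b : ℝ} (hp0 : 0 ≤ p) (hp1 : p ≤ 1) (ha : 0 ≤ a) (hb : 0 ≤ b) :
    (a + b) ^ p ≤ a ^ p + b ^ p := by
  have := NNReal.rpow_add_le_add_rpow (a.toNNReal) (b.toNNReal) hp0 hp1
  have h := NNReal.coe_le_coe.mpr this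
  push_cast [NNReal.coe_rpow] at h
  rwa [Real.coe_toNNReal _ ha, Real.coe_toNNReal _ hb] at h

set_option maxHeartbeats 1000000 in
/-- The squared core inequality, symmetric form, for `0 ≤ b ≤ a`. -/
lemma core_sq_sorted {p a b s : ℝ} (hp0 : 0 < p) (hp1 : p < 1) (hb : 0 ≤ b) (hab : b ≤ a)
    (hs : |s| ≤ a * b) :
    p ^ 2 * (a ^ 2 + b ^ 2 - 2 * s) ≤
      (a + b) ^ (2 - 2 * p) * (a ^ (2 * p) + b ^ (2 * p) - 2 * (a ^ (p - 1) * b ^ (p - 1)) * s) := by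
  have ha : 0 ≤ a := hb.trans hab
  rcases eq_or_lt_of_le ha with h | ha'
  · have hb0 : b = 0 := le_antisymm (hab.trans h.symm.le) hb
    have hs0 : s = 0 := by
      have := abs_nonneg s; rw [abs_le] at hs; nlinarith
    simp [← h, hb0, hs0, Real.zero_rpow (by positivity : (2:ℝ) * p ≠ 0)]
  -- a > 0
  set A := a ^ p with hA
  set B := b ^ p with hB
  set C := (a + b) ^ (1 - p) with hC
  have hA0 : 0 < A := Real.rpow_pos_of_pos ha' p
  have hB0 : 0 ≤ B := Real.rpow_nonneg hb p
  have hC0 : 0 < C := Real.rpow_pos_of_pos (by linarith) _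
  have hab2 : (0:ℝ) < a + b := by linarith
  have idC2 : (a + b) ^ (2 - 2 * p) = C * C := by
    rw [show (2:ℝ) - 2 * p = 2 * (1 - p) by ring,
      rpow_two_mul' hab2.le (by linarith : 1 - p ≠ 0)]
  have idA2 : a ^ (2 * p) = A * A := rpow_two_mul' ha'.le hp0.ne'
  have idB2 : b ^ (2 * p) = B * B := rpow_two_mul' hb hp0.ne'
  have idAa : a ^ (p - 1) * a = A := rpow_pm1_mul ha'.le hp0.ne' hp1.ne
  have idBb : b ^ (p - 1) * b = B := rpow_pm1_mul hb hp0.ne' hp1.ne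
  have idCab : C * (a + b) ^ p = a + b := by
    rw [hC, ← Real.rpow_add hab2, show 1 - p + p = (1:ℝ) by ring, Real.rpow_one]
  -- endpoint 1 : s = a*b
  have hE1 : p ^ 2 * (a - b) ^ 2 ≤ C * C * ((A - B) * (A - B)) := by
    have hkey := scalar_key hp0 hp1 hb hab
    have h1 : 0 ≤ p * (a - b) := mul_nonneg hp0.le (by linarith)
    have h2 := mul_self_le_mul_self h1 hkey
    rw [← hA, ← hB, ← hC] at h2
    nlinarith [h2]
  -- endpoint 2 : s = -(a*b)
  have hE2 : p ^ 2 * (a + b) ^ 2 ≤ C * C * ((A + B) * (A + B)) := by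
    have hsub : (a + b) ^ p ≤ A + B := rpow_subadd hp0.le hp1.le ha'.le hb
    have h1 : a + b ≤ C * (A + B) := by
      calc a + b = C * (a + b) ^ p := idCab.symm
        _ ≤ C * (A + B) := mul_le_mul_of_nonneg_left hsub hC0.le
    have h2 : p * (a + b) ≤ C * (A + B) := by nlinarith
    have h0 : 0 ≤ p * (a + b) := mul_nonneg hp0.le hab2.le
    nlinarith [mul_self_le_mul_self h0 h2]
  -- linear interpolation in s
  have hsle : s ≤ a * b := (abs_le.mp hs).2
  have hsge : -(a * b) ≤ s := (abs_le.mp hs).1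
  set K : ℝ := p ^ 2 - C * C * (a ^ (p - 1) * b ^ (p - 1)) with hK
  have hF : ∀ t : ℝ,
      (a + b) ^ (2 - 2*p) * (a ^ (2*p) + b ^ (2*p) - 2 * (a ^ (p-1) * b ^ (p-1)) * t)
        - p ^ 2 * (a ^ 2 + b ^ 2 - 2 * t)
      = (C * C * (A*A + B*B) - p^2 * (a^2 + b^2)) + 2 * K * t := by
    intro t; rw [idC2, idA2, idB2, hK]; ring
  have hm : a ^ (p - 1) * b ^ (p - 1) * (a * b) = A * B := by
    calc a ^ (p-1) * b ^ (p-1) * (a * b) = (a ^ (p-1) * a) * (b ^ (p-1) * b) := by ring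
      _ = A * B := by rw [idAa, idBb]
  have hm3 : C * C * (a ^ (p - 1) * b ^ (p - 1) * (a * b)) = C * C * (A * B) := by rw [hm]
  have hFs := hF s
  rcases le_or_gt 0 K with hK0 | hK0
  · -- use endpoint s = -(a*b)
    have e2 : 0 ≤ (C * C * (A*A + B*B) - p^2 * (a^2 + b^2)) + 2 * K * (-(a*b)) := by
      rw [hK]; nlinarith [hE2, hm3]
    have h1 : 2 * K * (-(a*b)) ≤ 2 * K * s :=
      mul_le_mul_of_nonneg_left hsge (by linarith)
    linarith [hFs]
  · -- use endpoint s = a*b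
    have e1 : 0 ≤ (C * C * (A*A + B*B) - p^2 * (a^2 + b^2)) + 2 * K * (a*b) := by
      rw [hK]; nlinarith [hE1, hm3]
    have h1 : 2 * K * s ≥ 2 * K * (a*b) :=
      mul_le_mul_of_nonpos_left hsle (by linarith)
    linarith [hFs]

/-- The squared core inequality for arbitrary `a, b ≥ 0`. -/
lemma core_sq {p a b s : ℝ} (hp0 : 0 < p) (hp1 : p < 1) (ha : 0 ≤ a) (hb : 0 ≤ b)
    (hs : |s| ≤ a * b) :
    p ^ 2 * (a ^ 2 + b ^ 2 - 2 * s) ≤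
      (a + b) ^ (2 - 2 * p) * (a ^ (2 * p) + b ^ (2 * p) - 2 * (a ^ (p - 1) * b ^ (p - 1)) * s) := by
  rcases le_total b a with h | h
  · exact core_sq_sorted hp0 hp1 hb h hs
  · have h2 := core_sq_sorted hp0 hp1 ha h (by rwa [mul_comm])
    rw [show b + a = a + b by ring] at h2
    nlinarith [h2]

set_option maxHeartbeats 1000000 in
/-- For every `0 < m < 1` there is `c = c(m) > 0` such that for all `u, w ∈ ℝ^N`:
`‖w − u‖^{m+1} ≤ c·(‖w‖ + ‖u‖)^{(1−m)(1+m)/2}·‖w^{(m+1)/2} − u^{(m+1)/2}‖^{m+1}`. -/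
theorem norm_sub_pow_le_singular {N : ℕ} (hN : 1 ≤ N) (m : ℝ) (hm0 : 0 < m) (hm1 : m < 1) :
    ∃ c : ℝ, 0 < c ∧ ∀ u w : EuclideanSpace ℝ (Fin N),
      ‖w - u‖ ^ (m + 1) ≤
        c * (‖w‖ + ‖u‖) ^ ((1 - m) * (1 + m) / 2) *
          ‖vpow ((m + 1) / 2) w - vpow ((m + 1) / 2) u‖ ^ (m + 1) := by
  set p : ℝ := (m + 1) / 2 with hp
  have hp0 : 0 < p := by rw [hp]; linarith
  have hp1 : p < 1 := by rw [hp]; linarith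
  refine ⟨p ^ (-(m + 1)), Real.rpow_pos_of_pos hp0 _, fun u w => ?_⟩
  set a : ℝ := ‖w‖ with ha'
  set b : ℝ := ‖u‖ with hb'
  have ha : 0 ≤ a := norm_nonneg _
  have hb : 0 ≤ b := norm_nonneg _
  set s : ℝ := inner ℝ w u with hs'
  have hs : |s| ≤ a * b := abs_real_inner_le_norm w u
  -- squared norms
  have hwu : ‖w - u‖ ^ (2:ℕ) = a ^ 2 + b ^ 2 - 2 * s := by
    rw [norm_sub_sq_real]; ring
  have hv : ‖vpow p w - vpow p u‖ ^ (2:ℕ)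
      = a ^ (2 * p) + b ^ (2 * p) - 2 * (a ^ (p - 1) * b ^ (p - 1)) * s := by
    have idA2 : a ^ (2 * p) = (a ^ (p - 1) * a) * (a ^ (p - 1) * a) := by
      rw [rpow_pm1_mul ha hp0.ne' hp1.ne, rpow_two_mul' ha hp0.ne']
    have idB2 : b ^ (2 * p) = (b ^ (p - 1) * b) * (b ^ (p - 1) * b) := by
      rw [rpow_pm1_mul hb hp0.ne' hp1.ne, rpow_two_mul' hb hp0.ne']
    rw [vpow, vpow, norm_sub_sq_real, real_inner_smul_left, real_inner_smul_right,
      norm_smul, norm_smul]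
    rw [Real.norm_eq_abs, Real.norm_eq_abs, abs_of_nonneg (Real.rpow_nonneg ha _),
      abs_of_nonneg (Real.rpow_nonneg hb _), ← ha', ← hb', ← hs', idA2, idB2]
    ring
  -- core inequality
  have hcore := core_sq hp0 hp1 ha hb hs
  rw [← hwu, ← hv] at hcore
  -- deduce p * ‖w-u‖ ≤ (a+b)^(1-p) * ‖vpow p w - vpow p u‖
  have hlin : p * ‖w - u‖ ≤ (a + b) ^ (1 - p) * ‖vpow p w - vpow p u‖ := by
    have h2 : (p * ‖w - u‖) ^ (2:ℕ) ≤ ((a + b) ^ (1 - p) * ‖vpow p w - vpow p u‖) ^ (2:ℕ) := by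
      have idC : ((a + b) ^ (1 - p)) ^ (2:ℕ) = (a + b) ^ (2 - 2*p) := by
        rw [show (2:ℝ) - 2*p = 2 * (1 - p) by ring,
          rpow_two_mul' (by positivity : (0:ℝ) ≤ a + b) (by linarith : 1 - p ≠ 0)]
        ring
      calc (p * ‖w - u‖) ^ (2:ℕ) = p ^ 2 * ‖w - u‖ ^ (2:ℕ) := by ring
        _ ≤ (a + b) ^ (2 - 2*p) * ‖vpow p w - vpow p u‖ ^ (2:ℕ) := hcore
        _ = ((a + b) ^ (1 - p) * ‖vpow p w - vpow p u‖) ^ (2:ℕ) := by rw [← idC]; ring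
    have hx : 0 ≤ p * ‖w - u‖ := by positivity
    have hy : 0 ≤ (a + b) ^ (1 - p) * ‖vpow p w - vpow p u‖ := by positivity
    exact (pow_le_pow_iff_left₀ hx hy (by norm_num)).mp h2
  -- raise to the power (m+1)
  have hm1' : 0 ≤ m + 1 := by linarith
  have hr := Real.rpow_le_rpow (by positivity) hlin hm1'
  rw [Real.mul_rpow hp0.le (norm_nonneg _),
      Real.mul_rpow (Real.rpow_nonneg (by positivity) _) (norm_nonneg _),
      ← Real.rpow_mul (by positivity : (0:ℝ) ≤ a + b)] at hr
  have hexp : (1 - p) * (m + 1) = (1 - m) * (1 + m) / 2 := by rw [hp]; ring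
  rw [hexp] at hr
  -- divide by p^(m+1)
  have hcinv : p ^ (-(m+1)) * p ^ (m+1) = 1 := by
    rw [← Real.rpow_add hp0, show -(m+1) + (m+1) = (0:ℝ) by ring, Real.rpow_zero]
  calc ‖w - u‖ ^ (m + 1)
      = p ^ (-(m+1)) * (p ^ (m+1) * ‖w - u‖ ^ (m+1)) := by
        rw [← mul_assoc, hcinv, one_mul]
    _ ≤ p ^ (-(m+1)) * ((a + b) ^ ((1 - m) * (1 + m) / 2) * ‖vpow p w - vpow p u‖ ^ (m+1)) :=
        mul_le_mul_of_nonneg_left hr (Real.rpow_nonneg hp0.le _)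
    _ = p ^ (-(m + 1)) * (‖w‖ + ‖u‖) ^ ((1 - m) * (1 + m) / 2) *
          ‖vpow ((m + 1) / 2) w - vpow ((m + 1) / 2) u‖ ^ (m + 1) := by
        rw [← ha', ← hb', ← hp]; ring

end
end

section
/- Let E be a real Banach space, v : ℝ → E continuously differentiable, a ∈ ℝ and h > 0. Define f(t) := e^{−(t−a)/h} v(a) + (1/h) ∫_a^t e^{(s−t)/h} v(s) ds. Then for every t > a, f is differentiable at t with derivative f'(t) = (1/h) ∫_a^t e^{(s−t)/h} v'(s) ds; equivalently, the time derivative of this initial-value mollification equals the mollification (with the same formula and without initial term) of the time derivative of v. -/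
noncomputable section

/-- Let `E` be a real Banach space, `v : ℝ → E` continuously differentiable (with derivative
`v'`), `a ∈ ℝ`, `h > 0`, and let
`f(t) := e^{−(t−a)/h} v(a) + (1/h) ∫_a^t e^{(s−t)/h} v(s) ds` be the exponential time
mollification with initial value `v(a)`. Then for every `t > a`, `f` is differentiable at `t`
with `f'(t) = (1/h) ∫_a^t e^{(s−t)/h} v'(s) ds`, i.e. the time derivative of the mollification
is the (plain) mollification of the time derivative. -/
theorem hasDerivAt_expMollification_initialValue {E : Type*} [NormedAddCommGroup E]
    [NormedSpace ℝ E] [CompleteSpace E] (v v' : ℝ → E)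
    (hv : ∀ t, HasDerivAt v (v' t) t) (hv' : Continuous v')
    (a h : ℝ) (hh : 0 < h)
    (f : ℝ → E)
    (hf : ∀ t, f t = Real.exp (-(t - a) / h) • v a +
      (1 / h) • ∫ s in a..t, Real.exp ((s - t) / h) • v s)
    (t : ℝ) (ht : a < t) :
    HasDerivAt f ((1 / h) • ∫ s in a..t, Real.exp ((s - t) / h) • v' s) t := by
  have hvc : Continuous v := by
    rw [continuous_iff_continuousAt]; exact fun x => (hv x).continuousAt
  have hh' : h ≠ 0 := ne_of_gt hh
  set G : ℝ → E := fun u => ∫ s in a..u, Real.exp (s / h) • v s with hG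
  have hcont : Continuous fun s => Real.exp (s / h) • v s :=
    (Real.continuous_exp.comp (continuous_id.div_const h)).smul hvc
  have hGd : HasDerivAt G (Real.exp (t / h) • v t) t :=
    (hcont.integral_hasStrictDerivAt a t).hasDerivAt
  -- rewrite f
  have key : ∀ u, ∫ s in a..u, Real.exp ((s - u) / h) • v s = Real.exp (-u / h) • G u := by
    intro u
    rw [hG, ← intervalIntegral.integral_smul]
    apply intervalIntegral.integral_congr
    intro s _
    simp only [smul_smul, ← Real.exp_add]
    ring_nf
  have hf2 : ∀ u, f u = Real.exp (-(u - a) / h) • v a + ((1 / h) * Real.exp (-u / h)) • G u := by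
    intro u
    rw [hf u, key u, smul_smul]
  -- derivative of scalar coefficients
  have d1 : HasDerivAt (fun u => Real.exp (-(u - a) / h)) (Real.exp (-(t - a) / h) * (-1 / h)) t := by
    have : HasDerivAt (fun u : ℝ => -(u - a) / h) (-1 / h) t :=
      (((hasDerivAt_id t).sub_const a).neg).div_const h
    exact this.exp
  have d2 : HasDerivAt (fun u => (1 / h) * Real.exp (-u / h))
      ((1 / h) * (Real.exp (-t / h) * (-1 / h))) t := by
    have : HasDerivAt (fun u : ℝ => -u / h) (-1 / h) t := ((hasDerivAt_id t).neg).div_const h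
    exact this.exp.const_mul (1 / h)
  have dF : HasDerivAt f
      ((Real.exp (-(t - a) / h) * (-1 / h)) • v a +
        (((1 / h) * Real.exp (-t / h)) • (Real.exp (t / h) • v t) +
          ((1 / h) * (Real.exp (-t / h) * (-1 / h))) • G t)) t := by
    have := (d1.smul_const (v a)).add (d2.smul hGd)
    have heq : f = fun u => Real.exp (-(u - a) / h) • v a +
        ((1 / h) * Real.exp (-u / h)) • G u := funext hf2
    rw [heq]
    exact this
  -- integration by parts
  have hW : ∀ s, HasDerivAt (fun s => Real.exp ((s - t) / h) • v s)
      ((Real.exp ((s - t) / h) * (1 / h)) • v s + Real.exp ((s - t) / h) • v' s) s := by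
    intro s
    have hc : HasDerivAt (fun s : ℝ => Real.exp ((s - t) / h)) (Real.exp ((s - t) / h) * (1 / h)) s := by
      have : HasDerivAt (fun s : ℝ => (s - t) / h) (1 / h) s :=
        ((hasDerivAt_id s).sub_const t).div_const h
      exact this.exp
    have := hc.smul (hv s)
    convert this using 1
    abel
    abel
  have hW'int : IntervalIntegrable
      (fun s => (Real.exp ((s - t) / h) * (1 / h)) • v s + Real.exp ((s - t) / h) • v' s)
      MeasureTheory.volume a t := by
    apply Continuous.intervalIntegrable
    have hces : Continuous fun s : ℝ => Real.exp ((s - t) / h) :=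
      Real.continuous_exp.comp ((continuous_id.sub continuous_const).div_const h)
    exact ((hces.mul continuous_const).smul hvc).add (hces.smul hv')
  have ibp : (∫ s in a..t, (Real.exp ((s - t) / h) * (1 / h)) • v s + Real.exp ((s - t) / h) • v' s)
      = Real.exp ((t - t) / h) • v t - Real.exp ((a - t) / h) • v a :=
    intervalIntegral.integral_eq_sub_of_hasDerivAt (fun s _ => hW s) hW'int
  have hint1 : IntervalIntegrable (fun s => (Real.exp ((s - t) / h) * (1 / h)) • v s)
      MeasureTheory.volume a t := by
    apply Continuous.intervalIntegrable
    exact ((Real.continuous_exp.comp ((continuous_id.sub continuous_const).div_const h)).mul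
      continuous_const).smul hvc
  have hint2 : IntervalIntegrable (fun s => Real.exp ((s - t) / h) • v' s)
      MeasureTheory.volume a t := by
    apply Continuous.intervalIntegrable
    exact (Real.continuous_exp.comp ((continuous_id.sub continuous_const).div_const h)).smul hv'
  rw [intervalIntegral.integral_add hint1 hint2] at ibp
  have hsplit : (∫ s in a..t, Real.exp ((s - t) / h) • v' s)
      = Real.exp ((t - t) / h) • v t - Real.exp ((a - t) / h) • v a
        - ∫ s in a..t, (Real.exp ((s - t) / h) * (1 / h)) • v s := by
    rw [← ibp]; abel
  have key2 : (∫ s in a..t, (Real.exp ((s - t) / h) * (1 / h)) • v s)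
      = ((1 / h) * Real.exp (-t / h)) • G t := by
    have : (∫ s in a..t, (Real.exp ((s - t) / h) * (1 / h)) • v s)
        = (1 / h) • ∫ s in a..t, Real.exp ((s - t) / h) • v s := by
      rw [← intervalIntegral.integral_smul]
      apply intervalIntegral.integral_congr
      intro s _
      simp only [smul_smul]
      rw [mul_comm]
    rw [this, key t, smul_smul]
  -- finish
  convert dF using 1
  rw [hsplit, key2, smul_sub, smul_sub]
  have e1 : Real.exp ((t - t) / h) = 1 := by rw [sub_self, zero_div, Real.exp_zero]
  have e2 : Real.exp ((a - t) / h) = Real.exp (-(t - a) / h) := by rw [neg_sub]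
  have e3 : ((1 / h) * Real.exp (-t / h)) * Real.exp (t / h) = 1 / h := by
    have h0 : -t / h + t / h = 0 := by ring
    rw [mul_assoc, ← Real.exp_add, h0, Real.exp_zero, mul_one]
  rw [e1, e2, smul_smul ((1 / h) * Real.exp (-t / h)), e3]
  module


end
end

section
/- Let T > 0, h > 0, p ∈ [1, ∞), and let v : ℝ → ℝ^N be measurable with ∫_0^T ‖v(t)‖^p dt < ∞. Define ⟦v⟧_h(t) := (1/h) ∫_0^t e^{(s−t)/h} v(s) ds for t ∈ (0,T). Then ∫_0^T ‖⟦v⟧_h(t)‖^p dt ≤ ∫_0^T ‖v(t)‖^p dt; i.e. the exponential time mollification is a contraction on L^p((0,T), ℝ^N). -/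
open MeasureTheory
open scoped ENNReal NNReal

noncomputable section

/-- FTC computation: `∫ x in a..b, exp ((c - x)/h) = h e^{(c-a)/h} - h e^{(c-b)/h}`. -/
lemma aux_ftc_left {h : ℝ} (hh : 0 < h) (c a b : ℝ) :
    ∫ x in a..b, Real.exp ((c - x) / h) =
      h * Real.exp ((c - a) / h) - h * Real.exp ((c - b) / h) := by
  have hd : ∀ x ∈ Set.uIcc a b,
      HasDerivAt (fun y => -(h * Real.exp ((c - y) / h))) (Real.exp ((c - x) / h)) x := by
    intro x _
    have h1 : HasDerivAt (fun y : ℝ => (c - y) / h) (-1 / h) x :=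
      ((hasDerivAt_id x).const_sub c).div_const h
    have h2 := (Real.hasDerivAt_exp ((c - x) / h)).comp x h1
    have h3 := (h2.const_mul h).neg
    refine h3.congr_deriv ?_
    field_simp
  rw [intervalIntegral.integral_eq_sub_of_hasDerivAt hd
    (Continuous.intervalIntegrable (by fun_prop) a b)]
  ring

/-- FTC computation: `∫ x in a..b, exp ((x - c)/h) = h e^{(b-c)/h} - h e^{(a-c)/h}`. -/
lemma aux_ftc_right {h : ℝ} (hh : 0 < h) (c a b : ℝ) :
    ∫ x in a..b, Real.exp ((x - c) / h) =
      h * Real.exp ((b - c) / h) - h * Real.exp ((a - c) / h) := by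
  have hd : ∀ x ∈ Set.uIcc a b,
      HasDerivAt (fun y => h * Real.exp ((y - c) / h)) (Real.exp ((x - c) / h)) x := by
    intro x _
    have h1 : HasDerivAt (fun y : ℝ => (y - c) / h) (1 / h) x := by
      simpa using ((hasDerivAt_id x).sub_const c).div_const h
    have h2 := (Real.hasDerivAt_exp ((x - c) / h)).comp x h1
    have h3 := h2.const_mul h
    refine h3.congr_deriv ?_
    field_simp
  rw [intervalIntegral.integral_eq_sub_of_hasDerivAt hd
    (Continuous.intervalIntegrable (by fun_prop) a b)]

lemma aux_exp_left {h : ℝ} (hh : 0 < h) {a b : ℝ} (hab : a ≤ b) :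
    ∫⁻ x in Set.Ioc a b, ENNReal.ofReal (1 / h * Real.exp ((x - b) / h)) ≤ 1 := by
  have hint : IntegrableOn (fun x => 1 / h * Real.exp ((x - b) / h)) (Set.Ioc a b) :=
    Continuous.integrableOn_Ioc (by fun_prop)
  rw [← MeasureTheory.ofReal_integral_eq_lintegral_ofReal hint
    (ae_of_all _ fun x => by positivity)]
  apply ENNReal.ofReal_le_one.mpr
  rw [← intervalIntegral.integral_of_le hab, intervalIntegral.integral_const_mul,
    aux_ftc_right hh b a b, sub_self, zero_div, Real.exp_zero]
  have h1 := Real.exp_pos ((a - b) / h)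
  have h2 : 1 / h * (h * 1 - h * Real.exp ((a - b) / h)) = 1 - Real.exp ((a - b) / h) := by
    field_simp
  rw [h2]
  linarith

lemma aux_exp_right {h : ℝ} (hh : 0 < h) {a b : ℝ} (hab : a ≤ b) :
    ∫⁻ x in Set.Ioc a b, ENNReal.ofReal (1 / h * Real.exp ((a - x) / h)) ≤ 1 := by
  have hint : IntegrableOn (fun x => 1 / h * Real.exp ((a - x) / h)) (Set.Ioc a b) :=
    Continuous.integrableOn_Ioc (by fun_prop)
  rw [← MeasureTheory.ofReal_integral_eq_lintegral_ofReal hint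
    (ae_of_all _ fun x => by positivity)]
  apply ENNReal.ofReal_le_one.mpr
  rw [← intervalIntegral.integral_of_le hab, intervalIntegral.integral_const_mul,
    aux_ftc_left hh a a b, sub_self, zero_div, Real.exp_zero]
  have h1 := Real.exp_pos ((a - b) / h)
  have h2 : 1 / h * (h * 1 - h * Real.exp ((a - b) / h)) = 1 - Real.exp ((a - b) / h) := by
    field_simp
  rw [h2]
  linarith

/-- Jensen/Hölder: for a sub-probability weight `w`, `(∫⁻ w F)^p ≤ ∫⁻ w F^p`. -/
lemma aux_holder {α : Type*} [MeasurableSpace α] (μ : Measure α) {w F : α → ℝ≥0∞}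
    (hw : AEMeasurable w μ) (hF : AEMeasurable F μ) {p : ℝ} (hp : 1 ≤ p)
    (hw1 : ∫⁻ a, w a ∂μ ≤ 1) :
    (∫⁻ a, w a * F a ∂μ) ^ p ≤ ∫⁻ a, w a * F a ^ p ∂μ := by
  have hp0 : (0:ℝ) < p := lt_of_lt_of_le one_pos hp
  have hip : (0:ℝ) ≤ 1 / p := by positivity
  have hq : (0:ℝ) ≤ 1 - 1 / p := by
    have : 1 / p ≤ 1 := by rw [div_le_one hp0]; exact hp
    linarith
  have hFp : AEMeasurable (fun a => F a ^ p) μ :=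
    hF.pow (aemeasurable_const : AEMeasurable (fun _ => p) μ)
  have key := ENNReal.lintegral_mul_norm_pow_le (μ := μ) (f := fun a => w a * F a ^ p)
      (g := w) (hw.mul hFp) hw hip hq (by ring)
  have hpt : ∀ a, (w a * F a ^ p) ^ (1 / p) * w a ^ (1 - 1 / p) = w a * F a := by
    intro a
    rw [ENNReal.mul_rpow_of_nonneg _ _ hip, ← ENNReal.rpow_mul,
      mul_one_div_cancel hp0.ne', ENNReal.rpow_one, mul_right_comm,
      ← ENNReal.rpow_add_of_nonneg _ _ hip hq,
      show 1 / p + (1 - 1 / p) = 1 by ring, ENNReal.rpow_one]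
  have key2 : ∫⁻ a, w a * F a ∂μ ≤ (∫⁻ a, w a * F a ^ p ∂μ) ^ (1 / p) := by
    calc ∫⁻ a, w a * F a ∂μ
        = ∫⁻ a, (w a * F a ^ p) ^ (1 / p) * w a ^ (1 - 1 / p) ∂μ :=
          lintegral_congr fun a => (hpt a).symm
      _ ≤ (∫⁻ a, w a * F a ^ p ∂μ) ^ (1 / p) * (∫⁻ a, w a ∂μ) ^ (1 - 1 / p) := key
      _ ≤ (∫⁻ a, w a * F a ^ p ∂μ) ^ (1 / p) * 1 :=
          mul_le_mul_right (ENNReal.rpow_le_one hw1 hq) _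
      _ = (∫⁻ a, w a * F a ^ p ∂μ) ^ (1 / p) := mul_one _
  calc (∫⁻ a, w a * F a ∂μ) ^ p
      ≤ ((∫⁻ a, w a * F a ^ p ∂μ) ^ (1 / p)) ^ p := ENNReal.rpow_le_rpow key2 hp0.le
    _ = ∫⁻ a, w a * F a ^ p ∂μ := by
        rw [← ENNReal.rpow_mul, one_div_mul_cancel hp0.ne', ENNReal.rpow_one]

/-- The exponential time mollification `⟦v⟧_h(t) := (1/h) ∫_0^t e^{(s−t)/h} v(s) ds` is an
`L^p`-contraction on `(0,T)`: `∫_0^T ‖⟦v⟧_h‖^p ≤ ∫_0^T ‖v‖^p` for `p ∈ [1, ∞)`, `h > 0`. -/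
theorem expMollification_lp_contraction {N : ℕ} (T h p : ℝ) (hT : 0 < T) (hh : 0 < h)
    (hp : 1 ≤ p) (v : ℝ → EuclideanSpace ℝ (Fin N)) (hv : Measurable v)
    (hvp : IntegrableOn (fun t => ‖v t‖ ^ p) (Set.Ioc 0 T)) :
    (∫ t in (0:ℝ)..T, ‖(1 / h) • ∫ s in (0:ℝ)..t, Real.exp ((s - t) / h) • v s‖ ^ p) ≤
      ∫ t in (0:ℝ)..T, ‖v t‖ ^ p := by
  have hp0 : (0:ℝ) < p := lt_of_lt_of_le one_pos hp
  -- notation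
  set W : ℝ → ℝ → ℝ≥0∞ := fun t s => ENNReal.ofReal (1 / h * Real.exp ((s - t) / h)) with hWdef
  set g : ℝ → ℝ≥0∞ := fun s => (‖v s‖₊ : ℝ≥0∞) ^ p with hgdef
  have hvmeas : AEStronglyMeasurable v (volume.restrict (Set.Ioc 0 T)) :=
    hv.aestronglyMeasurable
  have hgm : Measurable g :=
    (hv.nnnorm.coe_nnreal_ennreal).pow (measurable_const : Measurable fun _ : ℝ => p)
  -- integrability of the norm
  have hnorm_int : IntegrableOn (fun s => ‖v s‖) (Set.Ioc 0 T) := by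
    have h1 : IntegrableOn (fun s => 1 + ‖v s‖ ^ p) (Set.Ioc 0 T) :=
      (integrableOn_const measure_Ioc_lt_top.ne).add hvp
    refine h1.mono' hv.norm.aestronglyMeasurable ?_
    filter_upwards with s
    rw [Real.norm_eq_abs, abs_of_nonneg (norm_nonneg _)]
    rcases le_total (‖v s‖) 1 with hle | hle
    · nlinarith [Real.rpow_nonneg (norm_nonneg (v s)) p]
    · have h2 := Real.rpow_le_rpow_of_exponent_le hle hp
      rw [Real.rpow_one] at h2
      linarith
  have hv_int : IntegrableOn v (Set.Ioc 0 T) := (integrable_norm_iff hvmeas).mp hnorm_int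
  -- measurability of the kernel in the second variable
  have hWm : ∀ t, Measurable fun s => W t s := fun t =>
    Measurable.ennreal_ofReal (by fun_prop)
  -- Step A: pointwise bound by the weighted lintegral
  have stepA : ∀ t ∈ Set.Ioc (0:ℝ) T,
      ENNReal.ofReal (‖(1 / h) • ∫ s in (0:ℝ)..t, Real.exp ((s - t) / h) • v s‖ ^ p) ≤
        ∫⁻ s in Set.Ioc 0 t, W t s * g s := by
    intro t ht
    have hnt : IntegrableOn (fun s => ‖v s‖) (Set.Ioc 0 t) :=
      hnorm_int.mono_set (Set.Ioc_subset_Ioc_right ht.2)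
    have hwt_int : IntegrableOn (fun s => 1 / h * Real.exp ((s - t) / h) * ‖v s‖)
        (Set.Ioc 0 t) := by
      refine (hnt.const_mul (1 / h)).mono' ?_ ?_
      · exact (Continuous.aestronglyMeasurable (by fun_prop)).mul
          hv.norm.aestronglyMeasurable
      · filter_upwards [ae_restrict_mem measurableSet_Ioc] with s hs
        have hexp : Real.exp ((s - t) / h) ≤ 1 := by
          rw [← Real.exp_zero]
          exact Real.exp_le_exp.mpr (div_nonpos_iff.mpr (Or.inr ⟨by linarith [hs.2], hh.le⟩))
        rw [Real.norm_eq_abs, abs_of_nonneg (by positivity)]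
        have := mul_le_mul_of_nonneg_right hexp (norm_nonneg (v s))
        calc 1 / h * Real.exp ((s - t) / h) * ‖v s‖
            = 1 / h * (Real.exp ((s - t) / h) * ‖v s‖) := by ring
          _ ≤ 1 / h * (1 * ‖v s‖) := by
              apply mul_le_mul_of_nonneg_left this (by positivity)
          _ = 1 / h * ‖v s‖ := by ring
    have hnn : (0:ℝ) ≤ ∫ s in Set.Ioc 0 t, 1 / h * Real.exp ((s - t) / h) * ‖v s‖ :=
      setIntegral_nonneg measurableSet_Ioc (fun s _ => by positivity)
    have hle1 : ‖(1 / h) • ∫ s in (0:ℝ)..t, Real.exp ((s - t) / h) • v s‖ ≤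
        ∫ s in Set.Ioc 0 t, 1 / h * Real.exp ((s - t) / h) * ‖v s‖ := by
      rw [norm_smul, Real.norm_eq_abs, abs_of_pos (by positivity : (0:ℝ) < 1 / h)]
      have h2 : ‖∫ s in (0:ℝ)..t, Real.exp ((s - t) / h) • v s‖ ≤
          ∫ s in (0:ℝ)..t, Real.exp ((s - t) / h) * ‖v s‖ := by
        have h3 := intervalIntegral.norm_integral_le_integral_norm
          (f := fun s => Real.exp ((s - t) / h) • v s) (a := 0) (b := t) (μ := volume) ht.1.le
        simpa [norm_smul, Real.norm_eq_abs, abs_of_pos (Real.exp_pos _)] using h3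
      calc 1 / h * ‖∫ s in (0:ℝ)..t, Real.exp ((s - t) / h) • v s‖
          ≤ 1 / h * ∫ s in (0:ℝ)..t, Real.exp ((s - t) / h) * ‖v s‖ :=
            mul_le_mul_of_nonneg_left h2 (by positivity)
        _ = ∫ s in (0:ℝ)..t, 1 / h * (Real.exp ((s - t) / h) * ‖v s‖) :=
            (intervalIntegral.integral_const_mul _ _).symm
        _ = ∫ s in Set.Ioc 0 t, 1 / h * Real.exp ((s - t) / h) * ‖v s‖ := by
            rw [intervalIntegral.integral_of_le ht.1.le]
            exact setIntegral_congr_fun measurableSet_Ioc (fun s _ => by ring)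
    have heq : ENNReal.ofReal (∫ s in Set.Ioc 0 t, 1 / h * Real.exp ((s - t) / h) * ‖v s‖) =
        ∫⁻ s in Set.Ioc 0 t, W t s * (‖v s‖₊ : ℝ≥0∞) := by
      rw [MeasureTheory.ofReal_integral_eq_lintegral_ofReal hwt_int
        (ae_of_all _ fun s => by positivity)]
      refine lintegral_congr fun s => ?_
      rw [ENNReal.ofReal_mul (by positivity), ofReal_norm, enorm_eq_nnnorm]
    have hhold := aux_holder (volume.restrict (Set.Ioc 0 t)) ((hWm t).aemeasurable)
      ((hv.nnnorm.coe_nnreal_ennreal).aemeasurable) hp (aux_exp_left hh ht.1.le)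
    calc ENNReal.ofReal (‖(1 / h) • ∫ s in (0:ℝ)..t, Real.exp ((s - t) / h) • v s‖ ^ p)
        ≤ ENNReal.ofReal ((∫ s in Set.Ioc 0 t, 1 / h * Real.exp ((s - t) / h) * ‖v s‖) ^ p) :=
          ENNReal.ofReal_le_ofReal (Real.rpow_le_rpow (norm_nonneg _) hle1 hp0.le)
      _ = (ENNReal.ofReal (∫ s in Set.Ioc 0 t, 1 / h * Real.exp ((s - t) / h) * ‖v s‖)) ^ p :=
          (ENNReal.ofReal_rpow_of_nonneg hnn hp0.le).symm
      _ = (∫⁻ s in Set.Ioc 0 t, W t s * (‖v s‖₊ : ℝ≥0∞)) ^ p := by rw [heq]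
      _ ≤ ∫⁻ s in Set.Ioc 0 t, W t s * g s := hhold
  -- the product kernel
  set G : ℝ → ℝ → ℝ≥0∞ := fun t s => if 0 < s ∧ s ≤ t ∧ t ≤ T then W t s * g s else 0
    with hGdef
  have hGm : Measurable (Function.uncurry G) := by
    apply Measurable.ite
    · exact ((measurableSet_lt measurable_const measurable_snd).inter
        ((measurableSet_le measurable_snd measurable_fst).inter
          (measurableSet_le measurable_fst measurable_const)))
    · exact (Measurable.ennreal_ofReal (by fun_prop)).mul (hgm.comp measurable_snd)
    · exact measurable_const
  have h1 : ∀ t ∈ Set.Ioc (0:ℝ) T, ∫⁻ s in Set.Ioc 0 t, W t s * g s = ∫⁻ s, G t s := by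
    intro t ht
    rw [← lintegral_indicator measurableSet_Ioc]
    refine lintegral_congr fun s => ?_
    rw [Set.indicator_apply]
    show _ = (if 0 < s ∧ s ≤ t ∧ t ≤ T then W t s * g s else 0)
    simp only [Set.mem_Ioc]
    refine if_congr ?_ rfl rfl
    constructor
    · rintro ⟨ha, hb⟩; exact ⟨ha, hb, ht.2⟩
    · rintro ⟨ha, hb, _⟩; exact ⟨ha, hb⟩
  have stepA' : ∀ t ∈ Set.Ioc (0:ℝ) T,
      ENNReal.ofReal (‖(1 / h) • ∫ s in (0:ℝ)..t, Real.exp ((s - t) / h) • v s‖ ^ p) ≤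
        ∫⁻ s, G t s := fun t ht => (stepA t ht).trans_eq (h1 t ht)
  have h2 : ∫⁻ t in Set.Ioc (0:ℝ) T, ∫⁻ s, G t s = ∫⁻ t, ∫⁻ s, G t s := by
    rw [← lintegral_indicator measurableSet_Ioc]
    refine lintegral_congr fun t => ?_
    rw [Set.indicator_apply]
    split_ifs with ht
    · rfl
    · symm
      have hz : ∀ s, G t s = 0 := by
        intro s
        show (if 0 < s ∧ s ≤ t ∧ t ≤ T then W t s * g s else 0) = 0
        rw [if_neg]
        rintro ⟨ha, hb, hc⟩
        exact ht (Set.mem_Ioc.mpr ⟨lt_of_lt_of_le ha hb, hc⟩)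
      simp [hz]
  have h3 : ∫⁻ t, ∫⁻ s, G t s = ∫⁻ s, ∫⁻ t, G t s :=
    lintegral_lintegral_swap hGm.aemeasurable
  have h4 : ∀ s, ∫⁻ t, G t s ≤ (Set.Ioc (0:ℝ) T).indicator g s := by
    intro s
    by_cases hs : 0 < s ∧ s ≤ T
    · have hWsm : Measurable fun t => W t s := Measurable.ennreal_ofReal (by fun_prop)
      have hb : ∀ t, G t s ≤ (Set.Icc s T).indicator (fun t => W t s) t * g s := by
        intro t
        show (if 0 < s ∧ s ≤ t ∧ t ≤ T then W t s * g s else 0) ≤ _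
        split_ifs with hc
        · rw [Set.indicator_of_mem (Set.mem_Icc.mpr ⟨hc.2.1, hc.2.2⟩)]
        · exact zero_le
      rw [Set.indicator_of_mem (Set.mem_Ioc.mpr hs)]
      calc ∫⁻ t, G t s ≤ ∫⁻ t, (Set.Icc s T).indicator (fun t => W t s) t * g s :=
            lintegral_mono hb
        _ = (∫⁻ t, (Set.Icc s T).indicator (fun t => W t s) t) * g s :=
            lintegral_mul_const _ (hWsm.indicator measurableSet_Icc)
        _ = (∫⁻ t in Set.Icc s T, W t s) * g s := by
            rw [lintegral_indicator measurableSet_Icc]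
        _ = (∫⁻ t in Set.Ioc s T, W t s) * g s := by
            rw [setLIntegral_congr (Ioc_ae_eq_Icc (μ := volume) (a := s) (b := T))]
        _ ≤ 1 * g s := mul_le_mul_left (aux_exp_right hh hs.2) _
        _ = g s := one_mul _
    · have hz : ∀ t, G t s = 0 := by
        intro t
        show (if 0 < s ∧ s ≤ t ∧ t ≤ T then W t s * g s else 0) = 0
        rw [if_neg]
        rintro ⟨ha, hb, hc⟩
        exact hs ⟨ha, hb.trans hc⟩
      simp only [hz, lintegral_zero]
      exact zero_le
  -- continuity, hence measurability, of the mollified function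
  have hu_int : IntegrableOn (fun s => Real.exp (s / h) • v s) (Set.Icc 0 T) := by
    rw [integrableOn_Icc_iff_integrableOn_Ioc]
    refine (hnorm_int.const_mul (Real.exp (T / h))).mono' ?_ ?_
    · exact (Continuous.aestronglyMeasurable (f := fun s => Real.exp (s / h)) (by fun_prop)).smul hvmeas
    · filter_upwards [ae_restrict_mem measurableSet_Ioc] with s hs
      rw [norm_smul, Real.norm_eq_abs, abs_of_pos (Real.exp_pos _)]
      exact mul_le_mul_of_nonneg_right
        (Real.exp_le_exp.mpr (div_le_div_of_nonneg_right hs.2 hh.le)) (norm_nonneg _)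
  have hP : ContinuousOn (fun t => ∫ s in Set.Ioc 0 t, Real.exp (s / h) • v s)
      (Set.Icc 0 T) := intervalIntegral.continuousOn_primitive hu_int
  have hfun_eq : ∀ t ∈ Set.Icc (0:ℝ) T,
      (∫ s in (0:ℝ)..t, Real.exp ((s - t) / h) • v s) =
        Real.exp (-t / h) • ∫ s in Set.Ioc 0 t, Real.exp (s / h) • v s := by
    intro t ht
    rw [← intervalIntegral.integral_of_le ht.1, ← intervalIntegral.integral_smul]
    refine intervalIntegral.integral_congr fun s _ => ?_
    rw [smul_smul, ← Real.exp_add, show -t / h + s / h = (s - t) / h by ring]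
  have hcont : ContinuousOn
      (fun t => ‖(1 / h) • ∫ s in (0:ℝ)..t, Real.exp ((s - t) / h) • v s‖ ^ p)
      (Set.Icc 0 T) := by
    refine ContinuousOn.rpow_const ?_ (fun t _ => Or.inr hp0.le)
    refine ContinuousOn.norm ?_
    refine ContinuousOn.const_smul (g := fun t => ∫ s in (0:ℝ)..t, Real.exp ((s - t) / h) • v s) ?_ (1 / h)
    refine ContinuousOn.congr (ContinuousOn.smul (f := fun t => Real.exp (-t / h)) ?_ hP) hfun_eq
    exact Continuous.continuousOn (by fun_prop)
  have hmeasf : AEStronglyMeasurable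
      (fun t => ‖(1 / h) • ∫ s in (0:ℝ)..t, Real.exp ((s - t) / h) • v s‖ ^ p)
      (volume.restrict (Set.Ioc 0 T)) :=
    (hcont.mono Set.Ioc_subset_Icc_self).aestronglyMeasurable measurableSet_Ioc
  -- final assembly
  rw [intervalIntegral.integral_of_le hT.le, intervalIntegral.integral_of_le hT.le]
  rw [integral_eq_lintegral_of_nonneg_ae
      (ae_of_all _ fun t => Real.rpow_nonneg (norm_nonneg _) p) hmeasf,
    integral_eq_lintegral_of_nonneg_ae
      (ae_of_all _ fun t => Real.rpow_nonneg (norm_nonneg _) p) hvp.1]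
  apply ENNReal.toReal_mono
  · exact ne_top_of_le_ne_top hvp.2.ne (lintegral_mono fun t => Real.ofReal_le_enorm _)
  · calc ∫⁻ t in Set.Ioc (0:ℝ) T,
          ENNReal.ofReal (‖(1 / h) • ∫ s in (0:ℝ)..t, Real.exp ((s - t) / h) • v s‖ ^ p)
        ≤ ∫⁻ t in Set.Ioc (0:ℝ) T, ∫⁻ s, G t s :=
          setLIntegral_mono hGm.lintegral_prod_right' stepA'
      _ = ∫⁻ t, ∫⁻ s, G t s := h2
      _ = ∫⁻ s, ∫⁻ t, G t s := h3
      _ ≤ ∫⁻ s, (Set.Ioc (0:ℝ) T).indicator g s := lintegral_mono h4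
      _ = ∫⁻ s in Set.Ioc (0:ℝ) T, g s := lintegral_indicator measurableSet_Ioc g
      _ = ∫⁻ t in Set.Ioc (0:ℝ) T, ENNReal.ofReal (‖v t‖ ^ p) := by
          refine lintegral_congr fun s => ?_
          show ((‖v s‖₊ : ℝ≥0∞) ^ p) = _
          rw [← ENNReal.ofReal_rpow_of_nonneg (norm_nonneg (v s)) hp0.le]
          congr 1
          exact (ofReal_norm _).symm


end
end

section
/- Let T > 0, p ∈ [1, ∞), and let v : ℝ → ℝ^N be measurable with ∫_0^T ‖v(t)‖^p dt < ∞. For h > 0 define ⟦v⟧_h(t) := (1/h) ∫_0^t e^{(s−t)/h} v(s) ds. Then ∫_0^T ‖⟦v⟧_h(t) − v(t)‖^p dt → 0 as h → 0⁺; i.e. the exponential time mollifications converge to v strongly in L^p((0,T), ℝ^N). -/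
open MeasureTheory Filter
open scoped ENNReal NNReal

noncomputable section

open Set Real ENNReal in
private abbrev Euc (N : ℕ) := EuclideanSpace ℝ (Fin N)

private lemma jensen_rpow_aux {α : Type*} [MeasurableSpace α] {μ : Measure α}
    [IsProbabilityMeasure μ] {f : α → ℝ≥0∞} (hf : AEMeasurable f μ) {p : ℝ} (hp : 1 ≤ p) :
    (∫⁻ a, f a ∂μ) ^ p ≤ ∫⁻ a, f a ^ p ∂μ := by
  have hp0 : (0:ℝ) < p := lt_of_lt_of_le one_pos hp
  rcases eq_or_lt_of_le hp with h1 | h1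
  · simp [← h1]
  · have hpne : p ≠ 0 := hp0.ne'
    have hp1ne : p - 1 ≠ 0 := sub_ne_zero.mpr (ne_of_gt h1)
    have hpq : p.HolderConjugate (p / (p - 1)) := Real.HolderConjugate.conjExponent h1
    have hHolder := ENNReal.lintegral_mul_le_Lp_mul_Lq μ hpq hf
      (aemeasurable_const (b := (1:ℝ≥0∞)))
    simp only [Pi.mul_apply, mul_one, ENNReal.one_rpow, lintegral_const, measure_univ,
      one_mul, ENNReal.one_rpow] at hHolder
    calc (∫⁻ a, f a ∂μ) ^ p ≤ ((∫⁻ a, f a ^ p ∂μ) ^ (1/p)) ^ p :=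
          ENNReal.rpow_le_rpow hHolder hp0.le
    _ = ∫⁻ a, f a ^ p ∂μ := by
        rw [← ENNReal.rpow_mul, one_div, inv_mul_cancel₀ hpne, ENNReal.rpow_one]

set_option maxHeartbeats 1000000 in
/-- The exponential time mollifications `⟦v⟧_h(t) := (1/h) ∫_0^t e^{(s−t)/h} v(s) ds`
converge to `v` strongly in `L^p((0,T), ℝ^N)` as `h → 0⁺`, for `p ∈ [1, ∞)`. -/
theorem expMollification_tendsto_lp {N : ℕ} (T p : ℝ) (hT : 0 < T) (hp : 1 ≤ p)
    (v : ℝ → EuclideanSpace ℝ (Fin N)) (hv : Measurable v)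
    (hvp : IntegrableOn (fun t => ‖v t‖ ^ p) (Set.Ioc 0 T)) :
    Tendsto
      (fun h : ℝ =>
        ∫ t in (0:ℝ)..T, ‖((1 / h) • ∫ s in (0:ℝ)..t, Real.exp ((s - t) / h) • v s) - v t‖ ^ p)
      (nhdsWithin 0 (Set.Ioi 0)) (nhds 0) := by
  have hp0 : (0:ℝ) < p := lt_of_lt_of_le one_pos hp
  set V : ℝ → Euc N := (Set.Ioc 0 T).indicator v with hVdef
  have hVmeas : Measurable V := by rw [hVdef]; exact hv.indicator measurableSet_Ioc
  -- pointwise power identity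
  have hpow : ∀ x : Euc N, (‖x‖₊ : ℝ≥0∞) ^ p = ENNReal.ofReal (‖x‖ ^ p) := by
    intro x
    rw [← enorm_eq_nnnorm, ← ofReal_norm, ENNReal.ofReal_rpow_of_nonneg (norm_nonneg _) hp0.le]
  -- finite p-energy of V
  set K : ℝ≥0∞ := ∫⁻ t, (‖V t‖₊ : ℝ≥0∞) ^ p with hKdef
  have hKeq : K = ∫⁻ t in Set.Ioc 0 T, (‖v t‖₊ : ℝ≥0∞) ^ p := by
    rw [hKdef, ← lintegral_indicator measurableSet_Ioc]
    refine lintegral_congr fun t => ?_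
    by_cases ht : t ∈ Set.Ioc 0 T
    · simp [hVdef, Set.indicator_of_mem ht]
    · simp [hVdef, Set.indicator_of_notMem ht, ENNReal.zero_rpow_of_pos hp0]
  have hK : K ≠ ∞ := by
    rw [hKeq]
    have hfin : (∫⁻ t in Set.Ioc 0 T, (‖(‖v t‖ ^ p)‖₊ : ℝ≥0∞)) < ⊤ := hvp.2
    refine ne_of_lt (lt_of_le_of_lt (le_of_eq ?_) hfin)
    refine lintegral_congr fun t => ?_
    rw [hpow, ← enorm_eq_nnnorm (‖v t‖ ^ p), Real.enorm_eq_ofReal (by positivity)]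
  -- basic exponent bookkeeping for `q := ENNReal.ofReal p`
  set q : ℝ≥0∞ := ENNReal.ofReal p with hqdef
  have hq0 : q ≠ 0 := by simp [hqdef, ENNReal.ofReal_eq_zero, not_le, hp0]
  have hqtop : q ≠ ∞ := ENNReal.ofReal_ne_top
  have hqreal : q.toReal = p := ENNReal.toReal_ofReal hp0.le
  have hq1 : 1 ≤ q := by
    rw [hqdef, ← ENNReal.ofReal_one]
    exact ENNReal.ofReal_le_ofReal hp
  -- integrability of V
  have hVint : Integrable V := by
    haveI : IsFiniteMeasure (volume.restrict (Set.Ioc 0 T)) := by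
      constructor
      rw [Measure.restrict_apply_univ]
      simp [Real.volume_Ioc]
    have hmem : MemLp v q (volume.restrict (Set.Ioc 0 T)) := by
      refine ⟨hv.aestronglyMeasurable, ?_⟩
      rw [eLpNorm_eq_lintegral_rpow_enorm_toReal hq0 hqtop, hqreal]
      refine ENNReal.rpow_lt_top_of_nonneg (by positivity) ?_
      rw [show (∫⁻ x in Set.Ioc 0 T, ‖v x‖ₑ ^ p) = K from hKeq.symm]
      exact hK
    have hv1 : IntegrableOn v (Set.Ioc 0 T) := hmem.integrable hq1
    exact hv1.integrable_indicator measurableSet_Ioc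
  -- the mollified function, rewritten by substitution
  set g : ℝ → ℝ → Euc N := fun h t => ∫ u in Set.Ioi (0:ℝ), Real.exp (-u) • V (t - h * u)
    with hgdef
  -- integrability facts
  have hVcomp : ∀ (h t : ℝ), h ≠ 0 → Integrable (fun u => V (t - h * u)) := by
    intro h t hh
    have h1 : Integrable (fun x => V (t - x)) := (integrable_comp_sub_left V t).mpr hVint
    simpa using h1.comp_mul_left' hh
  have hexp_int : IntegrableOn (fun u : ℝ => Real.exp (-u)) (Set.Ioi 0) := by
    simpa using exp_neg_integrableOn_Ioi 0 one_pos
  have hIoint : ∀ (h t : ℝ), 0 < h →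
      IntegrableOn (fun u => Real.exp (-u) • V (t - h * u)) (Set.Ioi 0) := by
    intro h t hh
    have hm : Measurable fun u => Real.exp (-u) • V (t - h * u) := by
      exact (Real.measurable_exp.comp measurable_neg).smul
        (hVmeas.comp (measurable_const.sub (measurable_const.mul measurable_id)))
    refine Integrable.mono ((hVcomp h t hh.ne').restrict (s := Set.Ioi 0))
      hm.aestronglyMeasurable ?_
    refine (ae_restrict_iff' measurableSet_Ioi).mpr (ae_of_all _ fun u hu => ?_)
    rw [norm_smul, Real.norm_eq_abs, abs_of_pos (Real.exp_pos _)]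
    calc Real.exp (-u) * ‖V (t - h * u)‖ ≤ 1 * ‖V (t - h * u)‖ := by
          refine mul_le_mul_of_nonneg_right ?_ (norm_nonneg _)
          rw [Real.exp_le_one_iff]
          simpa using (le_of_lt hu)
    _ = ‖V (t - h * u)‖ := one_mul _
  -- Step A: the substitution identity
  have hkey : ∀ h : ℝ, 0 < h → ∀ t ∈ Set.Ioc (0:ℝ) T,
      (1 / h) • (∫ s in (0:ℝ)..t, Real.exp ((s - t) / h) • v s) = g h t := by
    intro h hh t ht
    have ht0 : (0:ℝ) < t := ht.1
    have hth : (0:ℝ) < t / h := by positivity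
    have e1 : (∫ s in (0:ℝ)..t, Real.exp ((s - t) / h) • v s)
        = ∫ s in (0:ℝ)..t, Real.exp ((s - t) / h) • V s := by
      rw [intervalIntegral.integral_of_le ht0.le, intervalIntegral.integral_of_le ht0.le]
      refine setIntegral_congr_fun measurableSet_Ioc fun s hs => ?_
      rw [hVdef, Set.indicator_of_mem (Set.mem_Ioc.mpr
        ⟨(Set.mem_Ioc.mp hs).1, (Set.mem_Ioc.mp hs).2.trans ht.2⟩)]
    have e2 : (∫ u in (0:ℝ)..(t/h), Real.exp (-u) • V (t - h * u))
        = h⁻¹ • ∫ s in (0:ℝ)..t, Real.exp ((s - t) / h) • V s := by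
      have hsub := intervalIntegral.integral_comp_sub_mul
        (f := fun s => Real.exp ((s - t) / h) • V s) (a := 0) (b := t / h) hh.ne' t
      have harg : ∀ u : ℝ, (t - h * u - t) / h = -u := by
        intro u; field_simp; ring
      simp only [harg] at hsub
      rw [hsub]
      congr 1
      · congr 1 <;> field_simp <;> ring
    have e3 : (∫ u in Set.Ioi (0:ℝ), Real.exp (-u) • V (t - h * u))
        = ∫ u in (0:ℝ)..(t/h), Real.exp (-u) • V (t - h * u) := by
      rw [intervalIntegral.integral_of_le hth.le]
      have hsplit : Set.Ioi (0:ℝ) = Set.Ioc 0 (t/h) ∪ Set.Ioi (t/h) :=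
        (Set.Ioc_union_Ioi_eq_Ioi hth.le).symm
      have hint1 : IntegrableOn (fun u => Real.exp (-u) • V (t - h * u)) (Set.Ioc 0 (t/h)) :=
        (hIoint h t hh).mono_set Set.Ioc_subset_Ioi_self
      have hint2 : IntegrableOn (fun u => Real.exp (-u) • V (t - h * u)) (Set.Ioi (t/h)) :=
        (hIoint h t hh).mono_set (Set.Ioi_subset_Ioi hth.le)
      rw [hsplit, setIntegral_union (Set.Ioc_disjoint_Ioi le_rfl) measurableSet_Ioi hint1 hint2]
      have hzero : ∫ u in Set.Ioi (t/h), Real.exp (-u) • V (t - h * u) = 0 := by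
        rw [setIntegral_congr_fun measurableSet_Ioi
          (g := fun _ => (0 : Euc N)) fun u hu => ?_, integral_zero]
        have : t - h * u < 0 := by
          have : t < h * u := by
            rw [Set.mem_Ioi] at hu
            calc t = (t / h) * h := by field_simp
            _ < u * h := by exact mul_lt_mul_of_pos_right hu hh
            _ = h * u := mul_comm _ _
          linarith
        rw [hVdef, Set.indicator_of_notMem (by simp [Set.mem_Ioc]; intro h'; linarith)]
        simp
      rw [hzero, add_zero]
    rw [e1, one_div, ← e2, ← e3]
  -- Step B: the difference formula
  have hdiff : ∀ h : ℝ, 0 < h → ∀ t ∈ Set.Ioc (0:ℝ) T,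
      g h t - v t = ∫ u in Set.Ioi (0:ℝ), Real.exp (-u) • (V (t - h * u) - V t) := by
    intro h hh t ht
    have h2 : IntegrableOn (fun u : ℝ => Real.exp (-u) • V t) (Set.Ioi 0) :=
      hexp_int.smul_const (V t)
    have hvt : v t = ∫ u in Set.Ioi (0:ℝ), Real.exp (-u) • V t := by
      rw [integral_smul_const, integral_exp_neg_Ioi_zero, one_smul, hVdef,
        Set.indicator_of_mem ht]
    calc g h t - v t
        = (∫ u in Set.Ioi (0:ℝ), Real.exp (-u) • V (t - h * u)) -
            ∫ u in Set.Ioi (0:ℝ), Real.exp (-u) • V t := by rw [hgdef, ← hvt]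
    _ = ∫ u in Set.Ioi (0:ℝ), (Real.exp (-u) • V (t - h * u) - Real.exp (-u) • V t) :=
        (integral_sub (hIoint h t hh) h2).symm
    _ = _ := by
        refine integral_congr_ae (ae_of_all _ fun u => ?_)
        exact (smul_sub _ _ _).symm
  -- the probability measure with exponential density
  have hexp_lint : (∫⁻ u in Set.Ioi (0:ℝ), ENNReal.ofReal (Real.exp (-u))) = 1 := by
    rw [← ofReal_integral_eq_lintegral_ofReal hexp_int
      (ae_of_all _ fun u => (Real.exp_pos _).le), integral_exp_neg_Ioi_zero,
      ENNReal.ofReal_one]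
  set μ₀ : Measure ℝ := (volume.restrict (Set.Ioi (0:ℝ))).withDensity
    (fun u => ENNReal.ofReal (Real.exp (-u))) with hμ₀def
  have hdens : Measurable fun u : ℝ => ENNReal.ofReal (Real.exp (-u)) :=
    (Real.measurable_exp.comp measurable_neg).ennreal_ofReal
  haveI : IsProbabilityMeasure μ₀ := by
    constructor
    rw [hμ₀def, withDensity_apply _ MeasurableSet.univ, Measure.restrict_univ]
    exact hexp_lint
  -- Step C: pointwise Jensen bound
  have hptwise : ∀ h : ℝ, 0 < h → ∀ t : ℝ,
      (‖∫ u in Set.Ioi (0:ℝ), Real.exp (-u) • (V (t - h * u) - V t)‖₊ : ℝ≥0∞) ^ p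
        ≤ ∫⁻ u in Set.Ioi (0:ℝ),
            ENNReal.ofReal (Real.exp (-u)) * (‖V (t - h * u) - V t‖₊ : ℝ≥0∞) ^ p := by
    intro h hh t
    set w : ℝ → Euc N := fun u => V (t - h * u) - V t with hwdef
    have hwmeas : Measurable fun u => (‖w u‖₊ : ℝ≥0∞) :=
      ((hVmeas.comp (measurable_const.sub (measurable_const.mul measurable_id))).sub
        measurable_const).enorm
    have hwpmeas : Measurable fun u => (‖w u‖₊ : ℝ≥0∞) ^ p :=
      ENNReal.continuous_rpow_const.measurable.comp hwmeas
    have step1 : (‖∫ u in Set.Ioi (0:ℝ), Real.exp (-u) • w u‖₊ : ℝ≥0∞)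
        ≤ ∫⁻ u, (‖w u‖₊ : ℝ≥0∞) ∂μ₀ := by
      calc (‖∫ u in Set.Ioi (0:ℝ), Real.exp (-u) • w u‖₊ : ℝ≥0∞)
          ≤ ∫⁻ u in Set.Ioi (0:ℝ), ‖Real.exp (-u) • w u‖₊ :=
            enorm_integral_le_lintegral_enorm _
      _ = ∫⁻ u in Set.Ioi (0:ℝ), ENNReal.ofReal (Real.exp (-u)) * ‖w u‖₊ := by
          refine lintegral_congr fun u => ?_
          rw [nnnorm_smul, ENNReal.coe_mul, ← enorm_eq_nnnorm (Real.exp (-u)), Real.enorm_eq_ofReal (Real.exp_pos _).le]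
      _ = ∫⁻ u, (‖w u‖₊ : ℝ≥0∞) ∂μ₀ := by
          rw [hμ₀def, lintegral_withDensity_eq_lintegral_mul _ hdens hwmeas]
          rfl
    calc (‖∫ u in Set.Ioi (0:ℝ), Real.exp (-u) • w u‖₊ : ℝ≥0∞) ^ p
        ≤ (∫⁻ u, (‖w u‖₊ : ℝ≥0∞) ∂μ₀) ^ p := ENNReal.rpow_le_rpow step1 hp0.le
    _ ≤ ∫⁻ u, (‖w u‖₊ : ℝ≥0∞) ^ p ∂μ₀ := jensen_rpow_aux hwmeas.aemeasurable hp
    _ = ∫⁻ u in Set.Ioi (0:ℝ), ENNReal.ofReal (Real.exp (-u)) * (‖w u‖₊ : ℝ≥0∞) ^ p := by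
        rw [hμ₀def, lintegral_withDensity_eq_lintegral_mul _ hdens hwpmeas]
        rfl
  -- the translation defect functional
  set G : ℝ → ℝ≥0∞ := fun a => ∫⁻ s, (‖V (s - a) - V s‖₊ : ℝ≥0∞) ^ p with hGdef
  have hGmeas : Measurable G := by
    rw [hGdef]
    refine Measurable.lintegral_prod_right ?_
    refine ENNReal.continuous_rpow_const.measurable.comp ?_
    exact ((hVmeas.comp (measurable_snd.sub measurable_fst)).sub
      (hVmeas.comp measurable_snd)).enorm
  -- Step D: the main integral bound
  have hL_le : ∀ h : ℝ, 0 < h →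
      (∫⁻ t in Set.Ioc (0:ℝ) T, (‖g h t - v t‖₊ : ℝ≥0∞) ^ p)
        ≤ ∫⁻ u in Set.Ioi (0:ℝ), ENNReal.ofReal (Real.exp (-u)) * G (h * u) := by
    intro h hh
    have step1 : (∫⁻ t in Set.Ioc (0:ℝ) T, (‖g h t - v t‖₊ : ℝ≥0∞) ^ p)
        ≤ ∫⁻ t in Set.Ioc (0:ℝ) T, ∫⁻ u in Set.Ioi (0:ℝ),
            ENNReal.ofReal (Real.exp (-u)) * (‖V (t - h * u) - V t‖₊ : ℝ≥0∞) ^ p := by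
      rw [setLIntegral_congr_fun measurableSet_Ioc
        (fun t ht => by rw [hdiff h hh t ht])]
      exact lintegral_mono fun t => hptwise h hh t
    have hk : Measurable (Function.uncurry fun (t u : ℝ) =>
        ENNReal.ofReal (Real.exp (-u)) * (‖V (t - h * u) - V t‖₊ : ℝ≥0∞) ^ p) := by
      refine Measurable.mul ?_ ?_
      · exact hdens.comp measurable_snd
      · refine ENNReal.continuous_rpow_const.measurable.comp ?_
        exact ((hVmeas.comp (measurable_fst.sub (measurable_const.mul measurable_snd))).sub
          (hVmeas.comp measurable_fst)).enorm
    have hswap : (∫⁻ t in Set.Ioc (0:ℝ) T, ∫⁻ u in Set.Ioi (0:ℝ),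
          ENNReal.ofReal (Real.exp (-u)) * (‖V (t - h * u) - V t‖₊ : ℝ≥0∞) ^ p)
        = ∫⁻ u in Set.Ioi (0:ℝ), ∫⁻ t in Set.Ioc (0:ℝ) T,
            ENNReal.ofReal (Real.exp (-u)) * (‖V (t - h * u) - V t‖₊ : ℝ≥0∞) ^ p :=
      lintegral_lintegral_swap hk.aemeasurable
    refine step1.trans (le_of_le_of_eq (le_of_eq hswap) rfl |>.trans ?_)
    refine lintegral_mono fun u => ?_
    have hmeas2 : Measurable fun t => (‖V (t - h * u) - V t‖₊ : ℝ≥0∞) ^ p := by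
      refine ENNReal.continuous_rpow_const.measurable.comp ?_
      exact ((hVmeas.comp (measurable_id.sub measurable_const)).sub hVmeas).enorm
    calc (∫⁻ t in Set.Ioc (0:ℝ) T,
          ENNReal.ofReal (Real.exp (-u)) * (‖V (t - h * u) - V t‖₊ : ℝ≥0∞) ^ p)
        = ENNReal.ofReal (Real.exp (-u)) *
            ∫⁻ t in Set.Ioc (0:ℝ) T, (‖V (t - h * u) - V t‖₊ : ℝ≥0∞) ^ p :=
          lintegral_const_mul _ hmeas2
    _ ≤ ENNReal.ofReal (Real.exp (-u)) * G (h * u) := by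
        refine mul_le_mul_right ?_ _
        exact setLIntegral_le_lintegral _ _
  -- Step E1: uniform bound on G
  have htri : ∀ x y : Euc N, (‖x - y‖₊ : ℝ≥0∞) ^ p
      ≤ (2:ℝ≥0∞) ^ p * ((‖x‖₊ : ℝ≥0∞) ^ p + (‖y‖₊ : ℝ≥0∞) ^ p) := by
    intro x y
    have h1 : (‖x - y‖₊ : ℝ≥0∞) ≤ (‖x‖₊ : ℝ≥0∞) + (‖y‖₊ : ℝ≥0∞) := by
      exact_mod_cast nnnorm_sub_le x y
    have h2 : (‖x‖₊ : ℝ≥0∞) + (‖y‖₊ : ℝ≥0∞)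
        ≤ 2 * max (‖x‖₊ : ℝ≥0∞) (‖y‖₊ : ℝ≥0∞) := by
      rw [two_mul]
      exact add_le_add (le_max_left _ _) (le_max_right _ _)
    calc (‖x - y‖₊ : ℝ≥0∞) ^ p
        ≤ (2 * max (‖x‖₊ : ℝ≥0∞) (‖y‖₊ : ℝ≥0∞)) ^ p :=
          ENNReal.rpow_le_rpow (h1.trans h2) hp0.le
    _ = (2:ℝ≥0∞) ^ p * (max (‖x‖₊ : ℝ≥0∞) (‖y‖₊ : ℝ≥0∞)) ^ p :=
          ENNReal.mul_rpow_of_nonneg _ _ hp0.le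
    _ ≤ (2:ℝ≥0∞) ^ p * ((‖x‖₊ : ℝ≥0∞) ^ p + (‖y‖₊ : ℝ≥0∞) ^ p) := by
        refine mul_le_mul_right ?_ _
        rcases le_total ((‖x‖₊ : ℝ≥0∞)) ((‖y‖₊ : ℝ≥0∞)) with hc | hc
        · rw [max_eq_right hc]; exact le_add_self
        · rw [max_eq_left hc]; exact le_self_add
  set C : ℝ≥0∞ := (2:ℝ≥0∞) ^ p * (K + K) with hCdef
  have hC : C ≠ ∞ := by
    rw [hCdef]
    refine ENNReal.mul_ne_top ?_ ?_
    · exact (ENNReal.rpow_lt_top_of_nonneg hp0.le (by simp)).ne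
    · exact ENNReal.add_ne_top.mpr ⟨hK, hK⟩
  have hVpmeas : Measurable fun s => (‖V s‖₊ : ℝ≥0∞) ^ p :=
    ENNReal.continuous_rpow_const.measurable.comp hVmeas.enorm
  have hGle : ∀ a : ℝ, G a ≤ C := by
    intro a
    have hVtransmeas : Measurable fun s => (‖V (s - a)‖₊ : ℝ≥0∞) ^ p :=
      hVpmeas.comp (measurable_id.sub measurable_const)
    have h1 : G a ≤ ∫⁻ s, (2:ℝ≥0∞) ^ p * ((‖V (s - a)‖₊ : ℝ≥0∞) ^ p + (‖V s‖₊ : ℝ≥0∞) ^ p) :=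
      lintegral_mono fun s => htri _ _
    have htrans : (∫⁻ s, (‖V (s - a)‖₊ : ℝ≥0∞) ^ p) = K :=
      (measurePreserving_sub_right volume a).lintegral_comp hVpmeas
    calc G a ≤ _ := h1
    _ = (2:ℝ≥0∞) ^ p * ∫⁻ s, ((‖V (s - a)‖₊ : ℝ≥0∞) ^ p + (‖V s‖₊ : ℝ≥0∞) ^ p) :=
        lintegral_const_mul _ (hVtransmeas.add hVpmeas)
    _ = C := by
        rw [hCdef, lintegral_add_left hVtransmeas, htrans, hKdef]
  -- Step E2: continuity of translation in Lp gives `G → 0` at `0`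
  haveI : Fact ((1:ℝ≥0∞) ≤ q) := ⟨hq1⟩
  have hVmem : MemLp V q volume := by
    refine ⟨hVmeas.aestronglyMeasurable, ?_⟩
    rw [eLpNorm_eq_lintegral_rpow_enorm_toReal hq0 hqtop, hqreal]
    exact ENNReal.rpow_lt_top_of_nonneg (by positivity) hK
  set Vlp : Lp (Euc N) q (volume : Measure ℝ) := hVmem.toLp V with hVlpdef
  set Φ : C(ℝ, C(ℝ, ℝ)) := ContinuousMap.curry (ContinuousMap.mk (fun z : ℝ × ℝ => z.2 - z.1) (by fun_prop))
    with hΦdef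
  have hΦapp : ∀ a x : ℝ, Φ a x = x - a := fun a x => rfl
  have hΦmp : ∀ a : ℝ, MeasurePreserving (Φ a) volume volume := by
    intro a
    have := measurePreserving_sub_right (volume : Measure ℝ) a
    convert this using 1
    exact funext (hΦapp a)
  set F : ℝ → Lp (Euc N) q (volume : Measure ℝ) :=
    fun a => Lp.compMeasurePreserving (Φ a) (hΦmp a) Vlp with hFdef
  have hFcont : Continuous F :=
    Continuous.compMeasurePreservingLp continuous_const Φ.continuous hΦmp hqtop
  have hFa : ∀ a : ℝ, eLpNorm (fun s => V (s - a) - V s) q volume = edist (F a) (F 0) := by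
    intro a
    rw [Lp.edist_def]
    refine eLpNorm_congr_ae ?_
    have h1 : (F a : ℝ → Euc N) =ᵐ[volume] fun s => V (s - a) := by
      refine (Lp.coeFn_compMeasurePreserving Vlp (hΦmp a)).trans ?_
      have h2 : (Vlp : ℝ → Euc N) =ᵐ[volume] V := hVmem.coeFn_toLp
      have h3 := (hΦmp a).quasiMeasurePreserving.ae_eq_comp h2
      refine h3.trans ?_
      refine ae_of_all _ fun s => ?_
      simp [Function.comp, hΦapp]
    have h0 : (F 0 : ℝ → Euc N) =ᵐ[volume] V := by
      refine (Lp.coeFn_compMeasurePreserving Vlp (hΦmp 0)).trans ?_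
      have h2 : (Vlp : ℝ → Euc N) =ᵐ[volume] V := hVmem.coeFn_toLp
      have h3 := (hΦmp 0).quasiMeasurePreserving.ae_eq_comp h2
      refine h3.trans ?_
      refine ae_of_all _ fun s => ?_
      simp [Function.comp, hΦapp]
    filter_upwards [h1, h0] with s hs1 hs0
    simp [Pi.sub_apply, hs1, hs0]
  have hGa : ∀ a : ℝ, G a = edist (F a) (F 0) ^ p := by
    intro a
    rw [← hFa a, eLpNorm_eq_lintegral_rpow_enorm_toReal hq0 hqtop, hqreal, ← ENNReal.rpow_mul,
      one_div, inv_mul_cancel₀ hp0.ne', ENNReal.rpow_one, hGdef]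
    rfl
  have hGtend : Tendsto G (nhds 0) (nhds 0) := by
    have h1 : Tendsto (fun a => edist (F a) (F 0)) (nhds 0) (nhds 0) := by
      have := (hFcont.tendsto 0).edist (tendsto_const_nhds (x := F 0))
      simpa [edist_self] using this
    have h2 : Tendsto (fun x : ℝ≥0∞ => x ^ p) (nhds 0) (nhds 0) := by
      have := (ENNReal.continuous_rpow_const (y := p)).tendsto 0
      simpa [ENNReal.zero_rpow_of_pos hp0] using this
    have := h2.comp h1
    refine this.congr fun a => ?_
    rw [Function.comp_apply, ← hGa a]
  -- Step E3: dominated convergence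
  have hM : Tendsto (fun h : ℝ => ∫⁻ u in Set.Ioi (0:ℝ),
      ENNReal.ofReal (Real.exp (-u)) * G (h * u)) (nhdsWithin 0 (Set.Ioi 0)) (nhds 0) := by
    have hbound_int : (∫⁻ u in Set.Ioi (0:ℝ), ENNReal.ofReal (Real.exp (-u)) * C) ≠ ∞ := by
      rw [lintegral_mul_const _ hdens, hexp_lint, one_mul]
      exact hC
    have := tendsto_lintegral_filter_of_dominated_convergence
      (μ := volume.restrict (Set.Ioi (0:ℝ)))
      (l := nhdsWithin (0:ℝ) (Set.Ioi 0))
      (F := fun h u => ENNReal.ofReal (Real.exp (-u)) * G (h * u))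
      (f := fun _ => 0)
      (fun u => ENNReal.ofReal (Real.exp (-u)) * C)
      (Eventually.of_forall fun h => hdens.mul (hGmeas.comp (measurable_const.mul measurable_id)))
      (Eventually.of_forall fun h => ae_of_all _ fun u => mul_le_mul_right (hGle _) _)
      hbound_int
      (ae_of_all _ fun u => ?_)
    · simpa using this
    · have h1 : Tendsto (fun h : ℝ => h * u) (nhdsWithin 0 (Set.Ioi 0)) (nhds 0) := by
        have h1' : Tendsto (fun h : ℝ => h * u) (nhds 0) (nhds 0) := by
          simpa using (continuous_mul_right u).tendsto (0:ℝ)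
        exact h1'.mono_left nhdsWithin_le_nhds
      have h2 : Tendsto (fun h : ℝ => G (h * u)) (nhdsWithin 0 (Set.Ioi 0)) (nhds 0) :=
        hGtend.comp h1
      have h3 : Tendsto (fun h : ℝ => ENNReal.ofReal (Real.exp (-u)) * G (h * u))
          (nhdsWithin 0 (Set.Ioi 0)) (nhds (ENNReal.ofReal (Real.exp (-u)) * 0)) :=
        ENNReal.Tendsto.const_mul h2 (Or.inr ENNReal.ofReal_ne_top)
      simpa using h3
  -- Step F: squeeze
  set L : ℝ → ℝ≥0∞ := fun h => ∫⁻ t in Set.Ioc (0:ℝ) T, (‖g h t - v t‖₊ : ℝ≥0∞) ^ p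
    with hLdef
  have hLtend : Tendsto L (nhdsWithin 0 (Set.Ioi 0)) (nhds 0) := by
    refine tendsto_of_tendsto_of_tendsto_of_le_of_le' tendsto_const_nhds hM ?_ ?_
    · exact Eventually.of_forall fun h => zero_le
    · refine eventually_nhdsWithin_of_forall fun h hh => hL_le h hh
  -- measurability of g h
  have hgmeas : ∀ h : ℝ, Measurable (g h) := by
    intro h
    have hm : StronglyMeasurable fun z : ℝ × ℝ => Real.exp (-z.2) • V (z.1 - h * z.2) := by
      refine Measurable.stronglyMeasurable ?_
      exact (Real.measurable_exp.comp (measurable_snd.neg)).smul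
        (hVmeas.comp (measurable_fst.sub (measurable_const.mul measurable_snd)))
    exact (hm.integral_prod_right').measurable
  -- Step G: identification of the target with toReal of L
  have hfinal : ∀ h : ℝ, 0 < h →
      (∫ t in (0:ℝ)..T, ‖((1 / h) • ∫ s in (0:ℝ)..t, Real.exp ((s - t) / h) • v s) - v t‖ ^ p)
        = (L h).toReal := by
    intro h hh
    rw [intervalIntegral.integral_of_le hT.le]
    have haem : AEMeasurable
        (fun t => ‖((1 / h) • ∫ s in (0:ℝ)..t, Real.exp ((s - t) / h) • v s) - v t‖ ^ p)
        (volume.restrict (Set.Ioc 0 T)) := by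
      have hgm : Measurable fun t => ‖g h t - v t‖ ^ p := by
        refine (Real.continuous_rpow_const hp0.le).measurable.comp ?_
        exact ((hgmeas h).sub hv).norm
      refine (AEMeasurable.congr hgm.aemeasurable ?_)
      refine (ae_restrict_iff' measurableSet_Ioc).mpr (ae_of_all _ fun t ht => ?_)
      dsimp only
      rw [hkey h hh t ht]
    rw [integral_eq_lintegral_of_nonneg_ae
      (ae_of_all _ fun t => by positivity) haem.aestronglyMeasurable]
    congr 1
    rw [hLdef]
    refine setLIntegral_congr_fun measurableSet_Ioc (fun t ht => ?_)
    rw [← hkey h hh t ht, ← hpow]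
  -- conclusion
  have htoReal : Tendsto (fun h => (L h).toReal) (nhdsWithin 0 (Set.Ioi 0)) (nhds 0) := by
    have := (ENNReal.tendsto_toReal (ENNReal.zero_ne_top)).comp hLtend
    simpa [Function.comp_def] using this
  refine htoReal.congr' ?_
  refine eventuallyEq_of_mem self_mem_nhdsWithin fun h hh => ?_
  exact (hfinal h hh).symm

end
end
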